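/- arXiv:2304.08669 — 7 statements merged into one kernel-verified Lean document; each statement's English description precedes it below -/
import Mathlib

section
/- Let f : [1,∞) → (0,∞) have growth exponent 0, i.e. log f(r)/log r → 0 as r → ∞, and suppose there exist c, κ, δ > 0 with f(r) ≥ δ and c⁻¹ α^{-κ} f(r) ≤ f(α r) ≤ c α^{κ} f(r) for all α, r ≥ 1. Then there exists f_up : [1,∞) → (0,∞) such that: (a) f_up ≥ f; (b) liminf_{r→∞} f_up(r)/f(r) < ∞; (c) f_up is eventually nondecreasing; (d) log f_up(r)/log r is nonincreasing in r; and (e) f_up has regular growth exponent 0, meaning that for every ε > 0 there exist β, r₀, C such that for r ≥ r₀ one has α^{-ε} ≤ f_up(α r)/f_up(r) ≤ α^{ε} for α ≥ β and C⁻¹ ≤ f_up(α r)/f_up(r) ≤ C for 1 ≤ α < β. -/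
/-- `f` has regular growth exponent `χ` (formulation (1.9) of the paper):
for every `ε > 0` there are `β, r₀, C ≥ 1` such that for `r ≥ r₀`,
`α^(χ-ε) ≤ f(αr)/f(r) ≤ α^(χ+ε)` for `α ≥ β` and `C⁻¹ ≤ f(αr)/f(r) ≤ C` for `1 ≤ α < β`. -/
def HasRegularGrowthExponent (f : ℝ → ℝ) (χ : ℝ) : Prop :=
  ∀ ε : ℝ, 0 < ε → ∃ β r₀ C : ℝ, 1 ≤ β ∧ 1 ≤ r₀ ∧ 1 ≤ C ∧
    ∀ r α : ℝ, r₀ ≤ r → 1 ≤ α →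
      (β ≤ α → α ^ (χ - ε) ≤ f (α * r) / f r ∧ f (α * r) / f r ≤ α ^ (χ + ε)) ∧
      (α < β → C⁻¹ ≤ f (α * r) / f r ∧ f (α * r) / f r ≤ C)


noncomputable def ggAux (u : ℝ → ℝ) (t : ℝ) : ℝ := sSup ((fun y => u y / y) '' Set.Ici t)
noncomputable def GAux (u : ℝ → ℝ) (x : ℝ) : ℝ := sSup ((fun t => t * ggAux u t) '' Set.Icc 1 x)

lemma ggne (u : ℝ → ℝ) (t : ℝ) : ((fun y => u y / y) '' Set.Ici t).Nonempty :=
  ⟨_, Set.mem_image_of_mem _ (Set.self_mem_Ici)⟩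

lemma Gne (u : ℝ → ℝ) {x : ℝ} (hx : 1 ≤ x) :
    ((fun t => t * ggAux u t) '' Set.Icc 1 x).Nonempty :=
  ⟨_, Set.mem_image_of_mem _ (Set.left_mem_Icc.2 hx)⟩

section Aux

variable {u : ℝ → ℝ} {C₁ κ : ℝ}
variable (hnn : ∀ y, 0 ≤ u y) (hlin : ∀ y, 0 ≤ y → u y ≤ C₁ + κ * y)
  (hC₁ : 0 ≤ C₁) (hκ : 0 < κ)

include hnn hlin hC₁ hκ

lemma ratio_bd : ∀ y, 1 ≤ y → u y / y ≤ C₁ + κ := by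
  intro y hy
  have hy0 : (0:ℝ) < y := lt_of_lt_of_le one_pos hy
  rw [div_le_iff₀ hy0]
  calc u y ≤ C₁ + κ * y := hlin y hy0.le
    _ ≤ C₁ * y + κ * y := by nlinarith
    _ = (C₁ + κ) * y := by ring

lemma gg_bddAbove : ∀ t, 1 ≤ t → BddAbove ((fun y => u y / y) '' Set.Ici t) := by
  intro t ht
  refine ⟨C₁ + κ, ?_⟩
  rintro v ⟨y, hy, rfl⟩
  exact ratio_bd hnn hlin hC₁ hκ y (ht.trans hy)

lemma gg_ge : ∀ t, 1 ≤ t → ∀ y, t ≤ y → u y / y ≤ ggAux u t := by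
  intro t ht y hy
  exact le_csSup (gg_bddAbove hnn hlin hC₁ hκ t ht) ⟨y, hy, rfl⟩

lemma gg_nonneg : ∀ t, 1 ≤ t → 0 ≤ ggAux u t := by
  intro t ht
  have := gg_ge hnn hlin hC₁ hκ t ht t le_rfl
  have h0 : 0 ≤ u t / t := div_nonneg (hnn t) (le_trans zero_le_one ht)
  linarith

lemma gg_le : ∀ t, 1 ≤ t → ggAux u t ≤ C₁ + κ := by
  intro t ht
  apply csSup_le (ggne u t)
  rintro v ⟨y, hy, rfl⟩
  exact ratio_bd hnn hlin hC₁ hκ y (ht.trans hy)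

lemma gg_anti : ∀ t t', 1 ≤ t → t ≤ t' → ggAux u t' ≤ ggAux u t := by
  intro t t' ht htt
  apply csSup_le_csSup (gg_bddAbove hnn hlin hC₁ hκ t ht) (ggne u t')
  exact Set.image_mono (Set.Ici_subset_Ici.2 htt)

lemma G_bddAbove : ∀ x, 1 ≤ x → BddAbove ((fun t => t * ggAux u t) '' Set.Icc 1 x) := by
  intro x hx
  refine ⟨x * (C₁ + κ), ?_⟩
  rintro v ⟨t, ⟨ht1, htx⟩, rfl⟩
  have h1 : ggAux u t ≤ C₁ + κ := gg_le hnn hlin hC₁ hκ t ht1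
  have h2 : 0 ≤ ggAux u t := gg_nonneg hnn hlin hC₁ hκ t ht1
  exact mul_le_mul htx h1 h2 (by linarith)

lemma G_ge : ∀ x, 1 ≤ x → ∀ t, 1 ≤ t → t ≤ x → t * ggAux u t ≤ GAux u x := by
  intro x hx t ht1 htx
  exact le_csSup (G_bddAbove hnn hlin hC₁ hκ x hx) ⟨t, ⟨ht1, htx⟩, rfl⟩

lemma G_nonneg : ∀ x, 1 ≤ x → 0 ≤ GAux u x := by
  intro x hx
  have := G_ge hnn hlin hC₁ hκ x hx 1 le_rfl hx
  have := gg_nonneg hnn hlin hC₁ hκ 1 le_rfl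
  linarith

lemma u_le_G : ∀ x, 1 ≤ x → u x ≤ GAux u x := by
  intro x hx
  have hx0 : (0:ℝ) < x := lt_of_lt_of_le one_pos hx
  have h1 : u x / x ≤ ggAux u x := gg_ge hnn hlin hC₁ hκ x hx x le_rfl
  have h2 : x * ggAux u x ≤ GAux u x := G_ge hnn hlin hC₁ hκ x hx x hx le_rfl
  have h3 : u x = x * (u x / x) := by field_simp
  nlinarith

lemma G_mono : ∀ x x', 1 ≤ x → x ≤ x' → GAux u x ≤ GAux u x' := by
  intro x x' hx hxx
  apply csSup_le_csSup (G_bddAbove hnn hlin hC₁ hκ x' (hx.trans hxx)) (Gne u hx)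
  exact Set.image_mono (Set.Icc_subset_Icc le_rfl hxx)

lemma G_div : ∀ x x', 1 ≤ x → x ≤ x' → GAux u x' ≤ (x' / x) * GAux u x := by
  intro x x' hx hxx
  have hx0 : (0:ℝ) < x := lt_of_lt_of_le one_pos hx
  apply csSup_le (Gne u (hx.trans hxx))
  rintro v ⟨t, ⟨ht1, htx⟩, rfl⟩
  have hG0 : 0 ≤ GAux u x := G_nonneg hnn hlin hC₁ hκ x hx
  have hxx' : 1 ≤ x' / x := (one_le_div hx0).2 hxx
  rcases le_or_gt t x with h | h
  · have := G_ge hnn hlin hC₁ hκ x hx t ht1 h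
    nlinarith
  · have hg : ggAux u t ≤ ggAux u x := gg_anti hnn hlin hC₁ hκ x t hx h.le
    have hg0 : 0 ≤ ggAux u t := gg_nonneg hnn hlin hC₁ hκ t ht1
    have hgx0 : 0 ≤ ggAux u x := gg_nonneg hnn hlin hC₁ hκ x hx
    have hxg : x * ggAux u x ≤ GAux u x := G_ge hnn hlin hC₁ hκ x hx x hx le_rfl
    calc t * ggAux u t ≤ t * ggAux u x := by nlinarith
      _ ≤ x' * ggAux u x := by nlinarith
      _ = (x' / x) * (x * ggAux u x) := by field_simp
      _ ≤ (x' / x) * GAux u x := by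
          apply mul_le_mul_of_nonneg_left hxg (by positivity)

lemma G_add : ∀ x h, 1 ≤ x → 0 ≤ h → GAux u (x + h) ≤ GAux u x + h * ggAux u x := by
  intro x h hx hh
  apply csSup_le (Gne u (by linarith))
  rintro v ⟨t, ⟨ht1, htx⟩, rfl⟩
  show t * ggAux u t ≤ _
  have hg0 : 0 ≤ ggAux u x := gg_nonneg hnn hlin hC₁ hκ x hx
  rcases le_or_gt t x with hc | hc
  · have := G_ge hnn hlin hC₁ hκ x hx t ht1 hc
    nlinarith
  · have hg : ggAux u t ≤ ggAux u x := gg_anti hnn hlin hC₁ hκ x t hx hc.le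
    have hg0' : 0 ≤ ggAux u t := gg_nonneg hnn hlin hC₁ hκ t ht1
    have hxg : x * ggAux u x ≤ GAux u x := G_ge hnn hlin hC₁ hκ x hx x hx le_rfl
    calc t * ggAux u t ≤ t * ggAux u x := by nlinarith
      _ = x * ggAux u x + (t - x) * ggAux u x := by ring
      _ ≤ GAux u x + h * ggAux u x := by nlinarith

lemma witnessW : ∀ x, 1 ≤ x → ∃ y, 1 ≤ y ∧ GAux u x - 1 < u y * min 1 (x / y) := by
  intro x hx
  have h1 : GAux u x - 1/2 < GAux u x := by linarith
  obtain ⟨v, ⟨t, ⟨ht1, htx⟩, rfl⟩, hv⟩ := exists_lt_of_lt_csSup (Gne u hx) h1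
  have ht0 : (0:ℝ) < t := lt_of_lt_of_le one_pos ht1
  have h2 : ggAux u t - 1/(2*t) < ggAux u t := by
    have : 0 < 1/(2*t) := by positivity
    linarith
  obtain ⟨w, ⟨y, hy, rfl⟩, hw⟩ := exists_lt_of_lt_csSup (ggne u t) h2
  refine ⟨y, ht1.trans hy, ?_⟩
  have hy0 : (0:ℝ) < y := lt_of_lt_of_le (lt_of_lt_of_le one_pos ht1) hy
  have hty : t / y ≤ min 1 (x / y) := by
    apply le_min
    · rw [div_le_one hy0]; exact hy
    · gcongr
  have key : t * (u y / y) > GAux u x - 1 := by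
    have : t * (ggAux u t - 1/(2*t)) < t * (u y / y) := by
      apply mul_lt_mul_of_pos_left hw ht0
    have he : t * (ggAux u t - 1/(2*t)) = t * ggAux u t - 1/2 := by field_simp
    nlinarith
  have : t * (u y / y) ≤ u y * min 1 (x / y) := by
    have h3 : u y * (t / y) ≤ u y * min 1 (x / y) := mul_le_mul_of_nonneg_left hty (hnn y)
    have h4 : t * (u y / y) = u y * (t / y) := by ring
    linarith
  linarith

end Aux

section Key

variable {u : ℝ → ℝ} {C₁ κ : ℝ}
variable (hnn : ∀ y, 0 ≤ u y) (hlin : ∀ y, 0 ≤ y → u y ≤ C₁ + κ * y)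
  (hC₁ : 0 ≤ C₁) (hκ : 0 < κ)
  (h0 : Filter.Tendsto (fun y => u y / y) Filter.atTop (nhds 0))

include hnn hlin hC₁ hκ h0

lemma keyB : ∃ K : ℝ, ∀ X, 1 ≤ X → ∃ x, X ≤ x ∧ GAux u x ≤ u x + K := by
  rcases em (BddAbove (u '' Set.Ici 1)) with hb | hb
  · -- bounded case
    set B := sSup (u '' Set.Ici 1) with hBdef
    have hB : ∀ y, 1 ≤ y → u y ≤ B := fun y hy =>
      le_csSup hb (Set.mem_image_of_mem _ hy)
    have hB0 : 0 ≤ B := (hnn 1).trans (hB 1 le_rfl)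
    have hGB : ∀ x, 1 ≤ x → GAux u x ≤ B := by
      intro x hx
      apply csSup_le (Gne u hx)
      rintro v ⟨t, ⟨ht1, htx⟩, rfl⟩
      show t * ggAux u t ≤ B
      have ht0 : (0:ℝ) < t := lt_of_lt_of_le one_pos ht1
      have hg : ggAux u t ≤ B / t := by
        apply csSup_le (ggne u t)
        rintro w ⟨y, hy, rfl⟩
        show u y / y ≤ B / t
        have hy0 : (0:ℝ) < y := lt_of_lt_of_le (lt_of_lt_of_le one_pos ht1) hy
        have h1 : u y / y ≤ B / y := by gcongr; exact hB y (ht1.trans hy)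
        have h2 : B / y ≤ B / t := by gcongr; exact hy
        linarith
      calc t * ggAux u t ≤ t * (B / t) := by
            exact mul_le_mul_of_nonneg_left hg ht0.le
        _ = B := by field_simp
    set S := {s : ℝ | ∃ T : ℝ, 1 ≤ T ∧ s = sSup (u '' Set.Ici T)} with hSdef
    have hSne : S.Nonempty := ⟨B, 1, le_rfl, rfl⟩
    have hSbd : BddBelow S := by
      refine ⟨0, ?_⟩
      rintro s ⟨T, hT, rfl⟩
      have hbdT : BddAbove (u '' Set.Ici T) :=
        hb.mono (Set.image_mono (Set.Ici_subset_Ici.2 hT))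
      have := le_csSup hbdT (Set.mem_image_of_mem u (Set.self_mem_Ici (a := T)))
      exact (hnn T).trans this
    set B' := sInf S with hB'def
    refine ⟨B - B' + 1, ?_⟩
    intro X hX
    have hBX : B' ≤ sSup (u '' Set.Ici X) := csInf_le hSbd ⟨X, hX, rfl⟩
    have hne : (u '' Set.Ici X).Nonempty := ⟨u X, Set.mem_image_of_mem _ Set.self_mem_Ici⟩
    have hlt : sSup (u '' Set.Ici X) - 1 < sSup (u '' Set.Ici X) := by linarith
    obtain ⟨v, ⟨y, hy, rfl⟩, hv⟩ := exists_lt_of_lt_csSup hne hlt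
    refine ⟨y, hy, ?_⟩
    have := hGB y (hX.trans hy)
    linarith
  · -- unbounded case
    refine ⟨2, ?_⟩
    intro X hX
    by_contra hcon
    push_neg at hcon
    have hcon' : ∀ x, X ≤ x → u x + 2 < GAux u x := by
      intro x hx
      have := hcon x hx
      linarith [this]
    set B₀ := C₁ + κ * X with hB₀def
    have hB₀ : ∀ y, 0 ≤ y → y ≤ X → u y ≤ B₀ := by
      intro y h1 h2
      have := hlin y h1
      nlinarith
    have hB₀0 : 0 ≤ B₀ := by nlinarith
    have step : ∀ y, X < y → B₀ < u y →
        ∃ z, X < z ∧ B₀ < u z ∧ u y + 1 ≤ u z ∧ u y / y < u z / z := by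
      intro y hXy hBy
      have hy1 : 1 ≤ y := hX.trans hXy.le
      obtain ⟨z, hz1, hw⟩ := witnessW hnn hlin hC₁ hκ y hy1
      have hGy : u y + 2 < GAux u y := hcon' y hXy.le
      have hz0 : (0:ℝ) < z := lt_of_lt_of_le one_pos hz1
      have hminle : u z * min 1 (y/z) ≤ u z := by
        nlinarith [hnn z, min_le_left 1 (y/z)]
      have huz_ge : u y + 1 < u z * min 1 (y/z) := by linarith
      have huz : u y + 1 < u z := lt_of_lt_of_le huz_ge hminle
      have hzB : B₀ < u z := by linarith
      have hzX : X < z := by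
        by_contra h
        push_neg at h
        have := hB₀ z hz0.le h
        linarith
      have hyz : y < z := by
        by_contra h
        push_neg at h
        have hGz : u z + 2 < GAux u z := hcon' z hzX.le
        have hGm : GAux u z ≤ GAux u y := G_mono hnn hlin hC₁ hκ z y hz1 h
        linarith
      have hmin : min 1 (y/z) = y/z := min_eq_right (by rw [div_le_one hz0]; exact hyz.le)
      rw [hmin] at huz_ge
      have hy0 : (0:ℝ) < y := lt_of_lt_of_le one_pos hy1
      have hratio : u y / y < u z / z := by
        have h2 : (u z * (y/z))/y = u z / z := by field_simp
        have h1 : (u y + 1)/y ≤ (u z * (y/z))/y := by gcongr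
        have h3 : (u y + 1)/y = u y / y + 1/y := by ring
        have h4 : 0 < 1/y := by positivity
        linarith
      exact ⟨z, hzX, hzB, huz.le, hratio⟩
    -- starting point
    rw [not_bddAbove_iff] at hb
    obtain ⟨v, ⟨y₀, hy₀1, rfl⟩, hv⟩ := hb B₀
    have hy₀X : X < y₀ := by
      by_contra h
      push_neg at h
      have := hB₀ y₀ (le_trans zero_le_one hy₀1) h
      linarith
    -- iterate
    have hstep : ∀ p : {y : ℝ // X < y ∧ B₀ < u y},
        ∃ z : {y : ℝ // X < y ∧ B₀ < u y},
          u p.1 + 1 ≤ u z.1 ∧ u p.1 / p.1 < u z.1 / z.1 := by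
      rintro ⟨y, hy1, hy2⟩
      obtain ⟨z, h1, h2, h3, h4⟩ := step y hy1 hy2
      exact ⟨⟨z, h1, h2⟩, h3, h4⟩
    choose next hnext using hstep
    set p₀ : {y : ℝ // X < y ∧ B₀ < u y} := ⟨y₀, hy₀X, hv⟩ with hp₀
    set seq : ℕ → {y : ℝ // X < y ∧ B₀ < u y} := fun n => next^[n] p₀ with hseq
    have hseqsucc : ∀ n, seq (n+1) = next (seq n) := by
      intro n
      simp [hseq, Function.iterate_succ_apply']
    have h1 : ∀ n : ℕ, u y₀ + n ≤ u (seq n).1 := by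
      intro n
      induction n with
      | zero => simp [hseq, hp₀]
      | succ n ih =>
        have := (hnext (seq n)).1
        rw [hseqsucc n]  at *
        push_cast
        push_cast at ih
        linarith
    have h2 : ∀ n : ℕ, u y₀ / y₀ ≤ u (seq n).1 / (seq n).1 := by
      intro n
      induction n with
      | zero => simp [hseq, hp₀]
      | succ n ih =>
        have := (hnext (seq n)).2
        rw [hseqsucc n] at *
        linarith
    have hy₀0 : (0:ℝ) < y₀ := lt_of_lt_of_le one_pos hy₀1
    have hρ : 0 < u y₀ / y₀ := div_pos (lt_of_le_of_lt hB₀0 hv) hy₀0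
    have hev : ∀ᶠ y in Filter.atTop, u y / y < u y₀ / y₀ :=
      h0.eventually (gt_mem_nhds hρ)
    obtain ⟨Y, hY⟩ := Filter.eventually_atTop.1 hev
    obtain ⟨n, hn⟩ := exists_nat_ge (κ * Y + C₁ - u y₀)
    have hseqn1 : (1:ℝ) ≤ (seq n).1 := hX.trans (seq n).2.1.le
    have hup : u (seq n).1 ≤ C₁ + κ * (seq n).1 := hlin _ (by linarith)
    have hge : κ * Y ≤ κ * (seq n).1 := by
      have := h1 n
      linarith
    have hYn : Y ≤ (seq n).1 := le_of_mul_le_mul_left hge hκ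
    have := hY (seq n).1 hYn
    have := h2 n
    linarith

end Key

lemma gg_small {u : ℝ → ℝ} {C₁ κ : ℝ}
    (hnn : ∀ y, 0 ≤ u y) (hlin : ∀ y, 0 ≤ y → u y ≤ C₁ + κ * y)
    (hC₁ : 0 ≤ C₁) (hκ : 0 < κ)
    (h0 : Filter.Tendsto (fun y => u y / y) Filter.atTop (nhds 0)) :
    ∀ ε : ℝ, 0 < ε → ∃ T, 1 ≤ T ∧ ∀ t, T ≤ t → ggAux u t ≤ ε := by
  intro ε hε
  have hev : ∀ᶠ y in Filter.atTop, u y / y < ε := h0.eventually (gt_mem_nhds hε)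
  obtain ⟨Y, hY⟩ := Filter.eventually_atTop.1 hev
  refine ⟨max 1 Y, le_max_left _ _, ?_⟩
  intro t ht
  apply csSup_le (ggne u t)
  rintro v ⟨y, hy, rfl⟩
  show u y / y ≤ ε
  exact (hY y (le_trans (le_trans (le_max_right 1 Y) ht) hy)).le


/-- Lemma 1.1: a positive function with growth exponent 0 and
polynomial two-sided growth control admits an upper-regular majorant `f_up`. -/
theorem exists_upper_regular_majorant (f : ℝ → ℝ)
    (hpos : ∀ r : ℝ, 1 ≤ r → 0 < f r)
    (hexp0 : Filter.Tendsto (fun r : ℝ => Real.log (f r) / Real.log r)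
      Filter.atTop (nhds 0))
    (hctrl : ∃ c κ δ : ℝ, 0 < c ∧ 0 < κ ∧ 0 < δ ∧
      ∀ α r : ℝ, 1 ≤ α → 1 ≤ r →
        δ ≤ f r ∧ c⁻¹ * α ^ (-κ) * f r ≤ f (α * r) ∧ f (α * r) ≤ c * α ^ κ * f r) :
    ∃ fup : ℝ → ℝ,
      (∀ r : ℝ, 1 ≤ r → 0 < fup r) ∧
      (∀ r : ℝ, 1 ≤ r → f r ≤ fup r) ∧
      (∃ M : ℝ, ∀ R : ℝ, ∃ r : ℝ, R ≤ r ∧ 1 ≤ r ∧ fup r / f r ≤ M) ∧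
      (∃ r₁ : ℝ, ∀ r s : ℝ, r₁ ≤ r → r ≤ s → fup r ≤ fup s) ∧
      (∀ r s : ℝ, 1 < r → r ≤ s →
        Real.log (fup s) / Real.log s ≤ Real.log (fup r) / Real.log r) ∧
      HasRegularGrowthExponent fup 0 := by
  obtain ⟨c₀, κ, δ, hc₀, hκ, hδ, hctrl⟩ := hctrl
  set c := max c₀ 1 with hcdef
  have hc1 : (1:ℝ) ≤ c := le_max_right _ _
  have hc0 : (0:ℝ) < c := lt_of_lt_of_le one_pos hc1
  -- upper control with c
  have hub : ∀ α r : ℝ, 1 ≤ α → 1 ≤ r → f (α * r) ≤ c * α ^ κ * f r := by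
    intro α r hα hr
    have h := (hctrl α r hα hr).2.2
    have hαpos : (0:ℝ) < α ^ κ := Real.rpow_pos_of_pos (lt_of_lt_of_le one_pos hα) κ
    have : c₀ * α ^ κ * f r ≤ c * α ^ κ * f r := by
      have h5 := hpos r hr
      gcongr
      exact le_max_left _ _
    linarith
  -- reversed lower control
  have hlb : ∀ α r : ℝ, 1 ≤ α → 1 ≤ r → f r ≤ c * α ^ κ * f (α * r) := by
    intro α r hα hr
    have h := (hctrl α r hα hr).2.1
    have hα0 : (0:ℝ) < α := lt_of_lt_of_le one_pos hα
    have hαpos : (0:ℝ) < α ^ κ := Real.rpow_pos_of_pos hα0 κ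
    have hneg : α ^ (-κ) = (α ^ κ)⁻¹ := Real.rpow_neg hα0.le κ
    rw [hneg] at h
    have hc₀0 : c₀ ≠ 0 := ne_of_gt hc₀
    have hfr : f r = (c₀ * α ^ κ) * (c₀⁻¹ * (α ^ κ)⁻¹ * f r) := by
      field_simp
    have h2 : f r ≤ c₀ * α ^ κ * f (α * r) := by
      calc f r = (c₀ * α ^ κ) * (c₀⁻¹ * (α ^ κ)⁻¹ * f r) := hfr
        _ ≤ (c₀ * α ^ κ) * f (α * r) := by
            apply mul_le_mul_of_nonneg_left h (by positivity)
        _ = c₀ * α ^ κ * f (α * r) := by ring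
    have hfar : 0 < f (α * r) := hpos _ (le_trans hr (le_mul_of_one_le_left (by linarith) hα))
    have : c₀ * α ^ κ * f (α * r) ≤ c * α ^ κ * f (α * r) := by
      gcongr
      exact le_max_left _ _
    linarith
  have hδf : ∀ r : ℝ, 1 ≤ r → δ ≤ f r := fun r hr => (hctrl 1 r le_rfl hr).1
  -- the function u
  set u : ℝ → ℝ := fun y => max (Real.log (f (Real.exp y))) 0 with hudef
  set C₁ : ℝ := max (Real.log c + Real.log (f 1)) 0 with hC₁def
  have hC₁ : (0:ℝ) ≤ C₁ := le_max_right _ _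
  have hnn : ∀ y, 0 ≤ u y := fun y => le_max_right _ _
  have hlin : ∀ y, 0 ≤ y → u y ≤ C₁ + κ * y := by
    intro y hy
    have hey : (1:ℝ) ≤ Real.exp y := Real.one_le_exp hy
    have h1 : f (Real.exp y) ≤ c * (Real.exp y) ^ κ * f 1 := by
      have := hub (Real.exp y) 1 hey le_rfl
      simpa using this
    have hfe : 0 < f (Real.exp y) := hpos _ hey
    have hf1 : 0 < f 1 := hpos 1 le_rfl
    have h2 : Real.log (f (Real.exp y)) ≤ Real.log (c * (Real.exp y) ^ κ * f 1) :=
      Real.log_le_log hfe h1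
    have h3 : Real.log (c * (Real.exp y) ^ κ * f 1)
        = Real.log c + κ * y + Real.log (f 1) := by
      rw [Real.log_mul (by positivity) (ne_of_gt hf1),
        Real.log_mul (ne_of_gt hc0) (by positivity), Real.log_rpow (Real.exp_pos y),
        Real.log_exp]
    have h4 : Real.log (f (Real.exp y)) ≤ C₁ + κ * y := by
      have : Real.log c + Real.log (f 1) ≤ C₁ := le_max_left _ _
      linarith
    have h5 : (0:ℝ) ≤ C₁ + κ * y := by positivity
    exact max_le h4 h5
  -- tendsto
  have h0 : Filter.Tendsto (fun y => u y / y) Filter.atTop (nhds 0) := by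
    have h1 : Filter.Tendsto (fun y : ℝ => Real.log (f (Real.exp y)) / y)
        Filter.atTop (nhds 0) := by
      have := hexp0.comp Real.tendsto_exp_atTop
      simpa only [Function.comp_def, Real.log_exp] using this
    have h2 : Filter.Tendsto (fun y : ℝ => max (Real.log (f (Real.exp y)) / y) 0)
        Filter.atTop (nhds 0) := by
      have := h1.max (tendsto_const_nhds (x := (0:ℝ)))
      simpa using this
    apply h2.congr'
    filter_upwards [Filter.eventually_ge_atTop (1:ℝ)] with y hy
    have hy0 : (0:ℝ) < y := lt_of_lt_of_le one_pos hy
    show max (Real.log (f (Real.exp y)) / y) 0 = u y / y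
    have hru : u y = max (Real.log (f (Real.exp y))) 0 := rfl
    rw [hru, ← max_div_div_right hy0.le]
    simp
  -- key quantities
  obtain ⟨K, hK⟩ := keyB hnn hlin hC₁ hκ h0
  set K₀ : ℝ := c * Real.exp κ * Real.exp (GAux u 1) with hK₀def
  set fup : ℝ → ℝ := fun r => if r < Real.exp 1 then K₀
    else Real.exp (GAux u (Real.log r)) with hfupdef
  have hK₀1 : 1 ≤ K₀ := by
    have h1 : (1:ℝ) ≤ Real.exp κ := Real.one_le_exp hκ.le
    have h2 : (1:ℝ) ≤ Real.exp (GAux u 1) :=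
      Real.one_le_exp (G_nonneg hnn hlin hC₁ hκ 1 le_rfl)
    calc (1:ℝ) = 1 * 1 * 1 := by ring
      _ ≤ c * Real.exp κ * Real.exp (GAux u 1) := by
          apply mul_le_mul (mul_le_mul hc1 h1 zero_le_one hc0.le) h2 zero_le_one
          positivity
  have hK₀pos : (0:ℝ) < K₀ := lt_of_lt_of_le one_pos hK₀1
  have hfup_ge : ∀ r, Real.exp 1 ≤ r → fup r = Real.exp (GAux u (Real.log r)) :=
    fun r hr => if_neg (not_lt.2 hr)
  have hfup_lt : ∀ r, r < Real.exp 1 → fup r = K₀ := fun r hr => if_pos hr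
  have hlog1 : ∀ r, Real.exp 1 ≤ r → 1 ≤ Real.log r := by
    intro r hr
    have := Real.log_le_log (Real.exp_pos 1) hr
    rwa [Real.log_exp] at this
  have he1 : (1:ℝ) ≤ Real.exp 1 := Real.one_le_exp zero_le_one
  refine ⟨fup, ?_, ?_, ?_, ?_, ?_, ?_⟩
  · -- positivity
    intro r hr
    rcases lt_or_ge r (Real.exp 1) with h | h
    · rw [hfup_lt r h]; exact hK₀pos
    · rw [hfup_ge r h]; exact Real.exp_pos _
  · -- majorant
    intro r hr
    rcases lt_or_ge r (Real.exp 1) with h | h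
    · rw [hfup_lt r h]
      have hr0 : (0:ℝ) < r := lt_of_lt_of_le one_pos hr
      set α := Real.exp 1 / r with hαdef
      have hα1 : 1 ≤ α := (one_le_div hr0).2 h.le
      have hαr : α * r = Real.exp 1 := div_mul_cancel₀ _ (ne_of_gt hr0)
      have h1 : f r ≤ c * α ^ κ * f (Real.exp 1) := by
        have := hlb α r hα1 hr
        rwa [hαr] at this
      have hαe : α ≤ Real.exp 1 := by
        rw [hαdef]
        exact div_le_self (Real.exp_pos 1).le hr
      have hακ : α ^ κ ≤ Real.exp κ := by
        calc α ^ κ ≤ (Real.exp 1) ^ κ :=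
              Real.rpow_le_rpow (by positivity) hαe hκ.le
          _ = Real.exp κ := Real.exp_one_rpow κ
      have hfe : f (Real.exp 1) ≤ Real.exp (GAux u 1) := by
        have h2 : f (Real.exp 1) ≤ Real.exp (u 1) := by
          have h5 : Real.exp (Real.log (f (Real.exp 1))) ≤ Real.exp (u 1) :=
            Real.exp_le_exp.2 (le_max_left _ _)
          rwa [Real.exp_log (hpos _ he1)] at h5
        exact h2.trans (Real.exp_le_exp.2 (u_le_G hnn hlin hC₁ hκ 1 le_rfl))
      have hfe0 : 0 < f (Real.exp 1) := hpos _ he1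
      have hα0 : 0 < α ^ κ := Real.rpow_pos_of_pos (lt_of_lt_of_le one_pos hα1) κ
      calc f r ≤ c * α ^ κ * f (Real.exp 1) := h1
        _ ≤ c * Real.exp κ * Real.exp (GAux u 1) := by gcongr
    · rw [hfup_ge r h]
      have hx1 : 1 ≤ Real.log r := hlog1 r h
      have h2 : f r ≤ Real.exp (u (Real.log r)) := by
        have h5 : Real.exp (Real.log (f r)) ≤ Real.exp (u (Real.log r)) := by
          apply Real.exp_le_exp.2
          have h6 : u (Real.log r) =
              max (Real.log (f (Real.exp (Real.log r)))) 0 := rfl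
          rw [h6, Real.exp_log (lt_of_lt_of_le one_pos hr)]
          exact le_max_left _ _
        rwa [Real.exp_log (hpos r hr)] at h5
      exact h2.trans (Real.exp_le_exp.2 (u_le_G hnn hlin hC₁ hκ _ hx1))
  · -- liminf
    refine ⟨Real.exp K * max 1 δ⁻¹, ?_⟩
    intro R
    obtain ⟨x, hXx, hGx⟩ := hK (max 1 (Real.log R)) (le_max_left _ _)
    have hx1 : 1 ≤ x := le_trans (le_max_left _ _) hXx
    have hr1 : (1:ℝ) ≤ Real.exp x := Real.one_le_exp (by linarith)
    have hfp := hpos _ hr1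
    refine ⟨Real.exp x, ?_, hr1, ?_⟩
    · rcases le_or_gt R 0 with h | h
      · exact h.trans (Real.exp_pos x).le
      · have h5 : Real.log R ≤ x := le_trans (le_max_right _ _) hXx
        calc R = Real.exp (Real.log R) := (Real.exp_log h).symm
          _ ≤ Real.exp x := Real.exp_le_exp.2 h5
    · have he : Real.exp 1 ≤ Real.exp x := Real.exp_le_exp.2 hx1
      rw [hfup_ge _ he, Real.log_exp]
      have hmax : Real.exp (u x) = max (f (Real.exp x)) 1 := by
        have h6 : u x = max (Real.log (f (Real.exp x))) 0 := rfl
        rw [h6]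
        rcases le_total (Real.log (f (Real.exp x))) 0 with h | h
        · rw [max_eq_right h, Real.exp_zero, max_eq_right]
          have h7 := Real.exp_le_exp.2 h
          rwa [Real.exp_log hfp, Real.exp_zero] at h7
        · rw [max_eq_left h, Real.exp_log hfp, max_eq_left]
          have h7 := Real.exp_le_exp.2 h
          rwa [Real.exp_log hfp, Real.exp_zero] at h7
      have h2 : max (f (Real.exp x)) 1 ≤ max 1 δ⁻¹ * f (Real.exp x) := by
        rcases le_total (f (Real.exp x)) 1 with hc | hc
        · rw [max_eq_right hc]
          have hδle := hδf _ hr1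
          have h8 : δ⁻¹ * δ ≤ δ⁻¹ * f (Real.exp x) :=
            mul_le_mul_of_nonneg_left hδle (le_of_lt (inv_pos.2 hδ))
          rw [inv_mul_cancel₀ (ne_of_gt hδ)] at h8
          calc (1:ℝ) ≤ δ⁻¹ * f (Real.exp x) := h8
            _ ≤ max 1 δ⁻¹ * f (Real.exp x) :=
                mul_le_mul_of_nonneg_right (le_max_right _ _) hfp.le
        · rw [max_eq_left hc]
          calc f (Real.exp x) = 1 * f (Real.exp x) := (one_mul _).symm
            _ ≤ max 1 δ⁻¹ * f (Real.exp x) :=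
                mul_le_mul_of_nonneg_right (le_max_left _ _) hfp.le
      rw [div_le_iff₀ hfp]
      calc Real.exp (GAux u x) ≤ Real.exp (u x) * Real.exp K := by
            rw [← Real.exp_add]
            exact Real.exp_le_exp.2 (by linarith)
        _ = max (f (Real.exp x)) 1 * Real.exp K := by rw [hmax]
        _ ≤ (max 1 δ⁻¹ * f (Real.exp x)) * Real.exp K :=
            mul_le_mul_of_nonneg_right h2 (Real.exp_pos K).le
        _ = Real.exp K * max 1 δ⁻¹ * f (Real.exp x) := by ring
  · -- eventually nondecreasing
    refine ⟨Real.exp 1, ?_⟩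
    intro r s hr hrs
    rw [hfup_ge r hr, hfup_ge s (hr.trans hrs)]
    apply Real.exp_le_exp.2
    apply G_mono hnn hlin hC₁ hκ _ _ (hlog1 r hr)
    exact Real.log_le_log (lt_of_lt_of_le (Real.exp_pos 1) hr) hrs
  · -- log fup / log nonincreasing
    intro r s hr hrs
    have hr0 : (0:ℝ) < r := lt_trans one_pos hr
    have hlr : 0 < Real.log r := Real.log_pos hr
    have hls : 0 < Real.log s := Real.log_pos (lt_of_lt_of_le hr hrs)
    have hlogK₀ : 0 ≤ Real.log K₀ := Real.log_nonneg hK₀1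
    rcases lt_or_ge s (Real.exp 1) with hse | hse
    · have hre : r < Real.exp 1 := lt_of_le_of_lt hrs hse
      rw [hfup_lt r hre, hfup_lt s hse]
      gcongr

    · rcases lt_or_ge r (Real.exp 1) with hre | hre
      · rw [hfup_lt r hre, hfup_ge s hse, Real.log_exp]
        have hs1 : 1 ≤ Real.log s := hlog1 s hse
        have h1 : GAux u (Real.log s) ≤ Real.log s * GAux u 1 := by
          have h9 := G_div hnn hlin hC₁ hκ 1 (Real.log s) le_rfl hs1
          simpa using h9
        have h2 : GAux u (Real.log s) / Real.log s ≤ GAux u 1 := by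
          rw [div_le_iff₀ hls]
          linarith [h1]
        have h3 : GAux u 1 ≤ Real.log K₀ := by
          have h9 : Real.log K₀ = Real.log c + κ + GAux u 1 := by
            rw [hK₀def, Real.log_mul (by positivity) (by positivity),
              Real.log_mul (ne_of_gt hc0) (by positivity), Real.log_exp, Real.log_exp]
          have hlc : 0 ≤ Real.log c := Real.log_nonneg hc1
          linarith
        have h4 : Real.log K₀ ≤ Real.log K₀ / Real.log r := by
          have hlr1 : Real.log r ≤ 1 := by
            have h9 := Real.log_le_log hr0 hre.le
            rwa [Real.log_exp] at h9
          rw [le_div_iff₀ hlr]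
          nlinarith
        linarith
      · rw [hfup_ge r hre, hfup_ge s hse, Real.log_exp, Real.log_exp]
        have hr1 : 1 ≤ Real.log r := hlog1 r hre
        have hlrs : Real.log r ≤ Real.log s := Real.log_le_log hr0 hrs
        have h1 := G_div hnn hlin hC₁ hκ (Real.log r) (Real.log s) hr1 hlrs
        rw [div_le_div_iff₀ hls hlr]
        have h2 : (Real.log s / Real.log r) * GAux u (Real.log r) * Real.log r
            = Real.log s * GAux u (Real.log r) := by
          field_simp
        have h3 : GAux u (Real.log s) * Real.log r
            ≤ (Real.log s / Real.log r) * GAux u (Real.log r) * Real.log r :=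
          mul_le_mul_of_nonneg_right h1 hlr.le
        rw [h2] at h3
        linarith
  · -- regular growth exponent 0
    intro ε hε
    obtain ⟨T, hT1, hT⟩ := gg_small hnn hlin hC₁ hκ h0 ε hε
    refine ⟨1, max (Real.exp 1) (Real.exp T), 1, le_rfl,
      le_trans he1 (le_max_left _ _), le_rfl, ?_⟩
    intro r α hr hα
    have hre : Real.exp 1 ≤ r := le_trans (le_max_left _ _) hr
    have hrT : Real.exp T ≤ r := le_trans (le_max_right _ _) hr
    have hr0 : (0:ℝ) < r := lt_of_lt_of_le (Real.exp_pos 1) hre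
    have hα0 : (0:ℝ) < α := lt_of_lt_of_le one_pos hα
    have hx1 : 1 ≤ Real.log r := hlog1 r hre
    have hxT : T ≤ Real.log r := by
      have h9 := Real.log_le_log (Real.exp_pos T) hrT
      rwa [Real.log_exp] at h9
    have hαr : Real.exp 1 ≤ α * r := le_trans hre (le_mul_of_one_le_left hr0.le hα)
    have hla : 0 ≤ Real.log α := Real.log_nonneg hα
    have hlar : Real.log (α * r) = Real.log r + Real.log α := by
      rw [Real.log_mul (ne_of_gt hα0) (ne_of_gt hr0)]
      ring
    rw [hfup_ge _ hαr, hfup_ge r hre, hlar]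
    have hGmono : GAux u (Real.log r) ≤ GAux u (Real.log r + Real.log α) :=
      G_mono hnn hlin hC₁ hκ _ _ hx1 (by linarith)
    have hGadd : GAux u (Real.log r + Real.log α)
        ≤ GAux u (Real.log r) + Real.log α * ggAux u (Real.log r) :=
      G_add hnn hlin hC₁ hκ _ _ hx1 hla
    have hgg : ggAux u (Real.log r) ≤ ε := hT _ hxT
    have hgg0 : 0 ≤ ggAux u (Real.log r) := gg_nonneg hnn hlin hC₁ hκ _ hx1
    have hratio : Real.exp (GAux u (Real.log r + Real.log α))
        / Real.exp (GAux u (Real.log r))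
        = Real.exp (GAux u (Real.log r + Real.log α) - GAux u (Real.log r)) :=
      (Real.exp_sub _ _).symm
    constructor
    · intro _
      constructor
      · rw [hratio]
        have h1 : α ^ ((0:ℝ) - ε) ≤ 1 :=
          Real.rpow_le_one_of_one_le_of_nonpos hα (by linarith)
        have h2 : (1:ℝ) ≤ Real.exp
            (GAux u (Real.log r + Real.log α) - GAux u (Real.log r)) :=
          Real.one_le_exp (by linarith)
        linarith
      · rw [hratio]
        have h1 : GAux u (Real.log r + Real.log α) - GAux u (Real.log r)
            ≤ Real.log α * ε := by
          have h9 : Real.log α * ggAux u (Real.log r) ≤ Real.log α * ε :=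
            mul_le_mul_of_nonneg_left hgg hla
          linarith
        calc Real.exp (GAux u (Real.log r + Real.log α) - GAux u (Real.log r))
            ≤ Real.exp (Real.log α * ε) := Real.exp_le_exp.2 h1
          _ = α ^ ((0:ℝ) + ε) := by
              rw [zero_add, Real.rpow_def_of_pos hα0]
    · intro hlt
      exact absurd hα (not_le.2 hlt)
end

section
/- For a function f : [1,∞) → (0,∞), the following two conditions are equivalent: (1) f has regular growth exponent χ, i.e. lim_{α,r→∞} |(log f(αr) − log f(r))/log α − χ| = 0 and for each β > 0, liminf_{r→∞} inf_{1≤α≤β} [log f(αr) − log f(r)] > −∞ and limsup_{r→∞} sup_{1≤α≤β} [log f(αr) − log f(r)] < ∞; (2) for every ε > 0 there exist β ≥ 1, r₀ ≥ 1 and c₃ ≥ 1 such that for all r ≥ r₀: α^{χ−ε} ≤ f(αr)/f(r) ≤ α^{χ+ε} whenever α ≥ β, and c₃⁻¹ ≤ f(αr)/f(r) ≤ c₃ whenever 1 ≤ α < β. -/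
/-- Formulation (1): the limit/liminf/limsup definition of regular growth exponent. -/
def RegGrowthLimit (f : ℝ → ℝ) (χ : ℝ) : Prop :=
  (∀ ε : ℝ, 0 < ε → ∃ α₀ r₀ : ℝ, 1 < α₀ ∧ 1 ≤ r₀ ∧
    ∀ α r : ℝ, α₀ ≤ α → r₀ ≤ r →
      |(Real.log (f (α * r)) - Real.log (f r)) / Real.log α - χ| ≤ ε) ∧
  (∀ β : ℝ, 0 < β →
    (∃ m r₀ : ℝ, ∀ r : ℝ, r₀ ≤ r → ∀ α : ℝ, 1 ≤ α → α ≤ β →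
      m ≤ Real.log (f (α * r)) - Real.log (f r)) ∧
    (∃ M r₀ : ℝ, ∀ r : ℝ, r₀ ≤ r → ∀ α : ℝ, 1 ≤ α → α ≤ β →
      Real.log (f (α * r)) - Real.log (f r) ≤ M))

/-- Formulation (2): the ratio-bound definition of regular growth exponent. -/
def RegGrowthRatio (f : ℝ → ℝ) (χ : ℝ) : Prop :=
  ∀ ε : ℝ, 0 < ε → ∃ β r₀ c₃ : ℝ, 1 ≤ β ∧ 1 ≤ r₀ ∧ 1 ≤ c₃ ∧
    ∀ r α : ℝ, r₀ ≤ r → 1 ≤ α →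
      (β ≤ α → α ^ (χ - ε) ≤ f (α * r) / f r ∧ f (α * r) / f r ≤ α ^ (χ + ε)) ∧
      (α < β → c₃⁻¹ ≤ f (α * r) / f r ∧ f (α * r) / f r ≤ c₃)

/-- the two formulations of "regular growth exponent χ" are equivalent
for a function positive on `[1,∞)`. -/
theorem regGrowth_limit_iff_ratio (f : ℝ → ℝ) (χ : ℝ) (hχ : 0 ≤ χ)
    (hpos : ∀ r : ℝ, 1 ≤ r → 0 < f r) :
    RegGrowthLimit f χ ↔ RegGrowthRatio f χ := by
  constructor
  · rintro ⟨h1, h2⟩ ε hε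
    obtain ⟨α₀, r₀, hα₀, hr₀, H⟩ := h1 ε hε
    obtain ⟨⟨m, r₁, Hm⟩, ⟨M, r₂, HM⟩⟩ := h2 α₀ (lt_trans one_pos hα₀)
    refine ⟨α₀, max 1 (max r₀ (max r₁ r₂)), max 1 (max (Real.exp M) (Real.exp (-m))),
      le_of_lt hα₀, le_max_left _ _, le_max_left _ _, ?_⟩
    intro r α hr hα
    have hr1 : (1:ℝ) ≤ r := le_trans (le_max_left _ _) hr
    have hαr : (1:ℝ) ≤ α * r := by nlinarith
    have hfr := hpos r hr1
    have hfar := hpos (α * r) hαr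
    have hratio : 0 < f (α * r) / f r := div_pos hfar hfr
    have hΔ : Real.log (f (α * r)) - Real.log (f r) = Real.log (f (α * r) / f r) :=
      (Real.log_div hfar.ne' hfr.ne').symm
    have hexp : f (α * r) / f r
        = Real.exp (Real.log (f (α * r)) - Real.log (f r)) := by
      rw [hΔ, Real.exp_log hratio]
    constructor
    · intro hβα
      have hα1 : 1 < α := lt_of_lt_of_le hα₀ hβα
      have hlogα : 0 < Real.log α := Real.log_pos hα1
      have hH := H α r hβα (le_trans (le_max_left r₀ _) (le_trans (le_max_right 1 _) hr))
      rw [abs_le] at hH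
      have hlow : (χ - ε) * Real.log α ≤ Real.log (f (α * r)) - Real.log (f r) :=
        (le_div_iff₀ hlogα).mp (by linarith [hH.1])
      have hup : Real.log (f (α * r)) - Real.log (f r) ≤ (χ + ε) * Real.log α :=
        (div_le_iff₀ hlogα).mp (by linarith [hH.2])
      constructor
      · rw [Real.rpow_def_of_pos (by linarith), hexp]
        exact Real.exp_le_exp.mpr (by rw [mul_comm (Real.log α)]; exact hlow)
      · rw [hexp, Real.rpow_def_of_pos (by linarith)]
        exact Real.exp_le_exp.mpr (by rw [mul_comm (Real.log α)]; exact hup)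
    · intro hαβ
      have hm := Hm r (le_trans (le_max_left r₁ r₂)
        (le_trans (le_max_right r₀ _) (le_trans (le_max_right 1 _) hr))) α hα (le_of_lt hαβ)
      have hM := HM r (le_trans (le_max_right r₁ r₂)
        (le_trans (le_max_right r₀ _) (le_trans (le_max_right 1 _) hr))) α hα (le_of_lt hαβ)
      constructor
      · have h1' : (max 1 (max (Real.exp M) (Real.exp (-m))))⁻¹ ≤ Real.exp m := by
          have h0 : Real.exp (-m) ≤ max 1 (max (Real.exp M) (Real.exp (-m))) :=
            le_trans (le_max_right _ _) (le_max_right 1 _)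
          calc (max 1 (max (Real.exp M) (Real.exp (-m))))⁻¹
              ≤ (Real.exp (-m))⁻¹ := inv_anti₀ (Real.exp_pos _) h0
            _ = Real.exp m := by rw [← Real.exp_neg, neg_neg]
        refine le_trans h1' ?_
        rw [hexp]
        exact Real.exp_le_exp.mpr hm
      · rw [hexp]
        exact le_trans (Real.exp_le_exp.mpr hM)
          (le_trans (le_max_left _ _) (le_max_right 1 _))
  · intro h
    constructor
    · intro ε hε
      obtain ⟨β, r₀, c₃, hβ, hr₀, hc₃, H⟩ := h ε hε
      refine ⟨β + 1, r₀, by linarith, hr₀, ?_⟩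
      intro α r hα hr
      have hα1 : (1:ℝ) ≤ α := by linarith
      have hβα : β ≤ α := by linarith
      have hlogα : 0 < Real.log α := Real.log_pos (by linarith)
      have hr1 : (1:ℝ) ≤ r := le_trans hr₀ hr
      have hαr : (1:ℝ) ≤ α * r := by nlinarith
      have hfr := hpos r hr1
      have hfar := hpos (α * r) hαr
      have hratio : 0 < f (α * r) / f r := div_pos hfar hfr
      have hΔ : Real.log (f (α * r)) - Real.log (f r) = Real.log (f (α * r) / f r) :=
        (Real.log_div hfar.ne' hfr.ne').symm
      obtain ⟨hlo, hhi⟩ := (H r α hr hα1).1 hβα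
      have hαpos : (0:ℝ) < α := by linarith
      have l1 : (χ - ε) * Real.log α ≤ Real.log (f (α * r)) - Real.log (f r) := by
        have := Real.log_le_log (Real.rpow_pos_of_pos hαpos _) hlo
        rwa [Real.log_rpow hαpos, ← hΔ] at this
      have l2 : Real.log (f (α * r)) - Real.log (f r) ≤ (χ + ε) * Real.log α := by
        have := Real.log_le_log hratio hhi
        rwa [Real.log_rpow hαpos, ← hΔ] at this
      rw [abs_le]
      constructor
      · have : χ - ε ≤ (Real.log (f (α * r)) - Real.log (f r)) / Real.log α :=
          (le_div_iff₀ hlogα).mpr l1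
        linarith
      · have : (Real.log (f (α * r)) - Real.log (f r)) / Real.log α ≤ χ + ε :=
          (div_le_iff₀ hlogα).mpr l2
        linarith
    · intro β' hβ'
      obtain ⟨β, r₀, c₃, hβ, hr₀, hc₃, H⟩ := h 1 one_pos
      have key : ∀ r : ℝ, r₀ ≤ r → ∀ α : ℝ, 1 ≤ α → α ≤ β' →
          (min (-(Real.log c₃)) (-|χ - 1| * Real.log β')
            ≤ Real.log (f (α * r)) - Real.log (f r)) ∧
          (Real.log (f (α * r)) - Real.log (f r)
            ≤ max (Real.log c₃) ((χ + 1) * Real.log β')) := by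
        intro r hr α hα hαβ'
        have hβ'1 : (1:ℝ) ≤ β' := le_trans hα hαβ'
        have hr1 : (1:ℝ) ≤ r := le_trans hr₀ hr
        have hαr : (1:ℝ) ≤ α * r := by nlinarith
        have hfr := hpos r hr1
        have hfar := hpos (α * r) hαr
        have hratio : 0 < f (α * r) / f r := div_pos hfar hfr
        have hΔ : Real.log (f (α * r)) - Real.log (f r) = Real.log (f (α * r) / f r) :=
          (Real.log_div hfar.ne' hfr.ne').symm
        have hαpos : (0:ℝ) < α := by linarith
        have hlogα : 0 ≤ Real.log α := Real.log_nonneg hα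
        have hlogαβ : Real.log α ≤ Real.log β' := Real.log_le_log hαpos hαβ'
        by_cases hc : β ≤ α
        · obtain ⟨hlo, hhi⟩ := (H r α hr hα).1 hc
          have l1 : (χ - 1) * Real.log α ≤ Real.log (f (α * r)) - Real.log (f r) := by
            have := Real.log_le_log (Real.rpow_pos_of_pos hαpos _) hlo
            rwa [Real.log_rpow hαpos, ← hΔ] at this
          have l2 : Real.log (f (α * r)) - Real.log (f r) ≤ (χ + 1) * Real.log α := by
            have := Real.log_le_log hratio hhi
            rwa [Real.log_rpow hαpos, ← hΔ] at this
          constructor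
          · refine le_trans (min_le_right _ _) (le_trans ?_ l1)
            nlinarith [neg_abs_le (χ - 1), abs_nonneg (χ - 1)]
          · refine le_trans l2 (le_trans ?_ (le_max_right _ _))
            nlinarith
        · push_neg at hc
          obtain ⟨hlo, hhi⟩ := (H r α hr hα).2 hc
          have hc₃pos : (0:ℝ) < c₃ := by linarith
          constructor
          · refine le_trans (min_le_left _ _) ?_
            have := Real.log_le_log (inv_pos.mpr hc₃pos) hlo
            rwa [Real.log_inv, ← hΔ] at this
          · refine le_trans ?_ (le_max_left _ _)
            have := Real.log_le_log hratio hhi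
            rwa [← hΔ] at this
      exact ⟨⟨_, r₀, fun r hr α hα hαβ' => (key r hr α hα hαβ').1⟩,
        ⟨_, r₀, fun r hr α hα hαβ' => (key r hr α hα hαβ').2⟩⟩
end

section
/- If f : [1,∞) → (0,∞) has regular growth exponent χ ≥ 0, then f has growth exponent χ, i.e. lim_{r→∞} log f(r)/log r = χ. -/
/-- a function with regular growth exponent `χ ≥ 0` has growth
exponent `χ`, i.e. `log f(r) / log r → χ` as `r → ∞`. -/
theorem regular_growth_implies_growth (f : ℝ → ℝ) (χ : ℝ) (hχ : 0 ≤ χ)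
    (hpos : ∀ r : ℝ, 1 ≤ r → 0 < f r)
    (hreg : RegGrowthLimit f χ) :
    Filter.Tendsto (fun r : ℝ => Real.log (f r) / Real.log r)
      Filter.atTop (nhds χ) := by
  rw [Metric.tendsto_atTop]
  intro ε hε
  obtain ⟨h1, h2⟩ := hreg
  obtain ⟨α₀, r₀, hα₀, hr₀, H⟩ := h1 (ε / 4) (by linarith)
  obtain ⟨⟨m, r₁, Hm⟩, ⟨M, r₂, HM⟩⟩ := h2 α₀ (by linarith)
  set L : ℝ := Real.log α₀ with hLdef
  have hLpos : 0 < L := Real.log_pos hα₀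
  have hα₀pos : 0 < α₀ := by linarith
  set b : ℝ := max r₀ (max r₁ (max r₂ 1)) with hbdef
  have hb1 : (1 : ℝ) ≤ b := le_max_of_le_right (le_max_of_le_right (le_max_right _ _))
  have hbr₀ : r₀ ≤ b := le_max_left _ _
  have hbr₁ : r₁ ≤ b := le_max_of_le_right (le_max_left _ _)
  have hbr₂ : r₂ ≤ b := le_max_of_le_right (le_max_of_le_right (le_max_left _ _))
  have hbpos : (0 : ℝ) < b := by linarith
  have hlogb : 0 ≤ Real.log b := Real.log_nonneg hb1
  -- telescoping lemma
  have tel : ∀ n : ℕ, ∀ s : ℝ, b ≤ s →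
      |Real.log (f (α₀ ^ n * s)) - Real.log (f s) - (n : ℝ) * L * χ|
        ≤ (n : ℝ) * L * (ε / 4) := by
    intro n
    induction n with
    | zero => intro s hs; simp
    | succ n ih =>
      intro s hs
      have hpow : (1 : ℝ) ≤ α₀ ^ n := one_le_pow₀ hα₀.le
      have hspos : 0 < s := lt_of_lt_of_le hbpos hs
      have hsle : s ≤ α₀ ^ n * s := le_mul_of_one_le_left hspos.le hpow
      have hrs : r₀ ≤ α₀ ^ n * s := le_trans hbr₀ (le_trans hs hsle)
      have key := H α₀ (α₀ ^ n * s) le_rfl hrs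
      set Δ : ℝ := Real.log (f (α₀ * (α₀ ^ n * s))) - Real.log (f (α₀ ^ n * s)) with hΔ
      have hkey : |Δ - χ * L| ≤ L * (ε / 4) := by
        have : Δ - χ * L = L * (Δ / L - χ) := by
          field_simp
        rw [this, abs_mul, abs_of_pos hLpos]
        exact mul_le_mul_of_nonneg_left key hLpos.le
      have hih := ih s hs
      have heq : α₀ ^ (n + 1) * s = α₀ * (α₀ ^ n * s) := by ring
      rw [heq]
      have habs : Real.log (f (α₀ * (α₀ ^ n * s))) - Real.log (f s)
          - ((n : ℝ) + 1) * L * χ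
          = (Δ - χ * L) + (Real.log (f (α₀ ^ n * s)) - Real.log (f s) - (n : ℝ) * L * χ) := by
        rw [hΔ]; ring
      rw [Nat.cast_succ, habs]
      calc |(Δ - χ * L) + (Real.log (f (α₀ ^ n * s)) - Real.log (f s) - (n : ℝ) * L * χ)|
          ≤ |Δ - χ * L| + |Real.log (f (α₀ ^ n * s)) - Real.log (f s) - (n : ℝ) * L * χ| :=
            abs_add_le _ _
        _ ≤ L * (ε / 4) + (n : ℝ) * L * (ε / 4) := add_le_add hkey hih
        _ = ((n : ℝ) + 1) * L * (ε / 4) := by ring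
  -- constant K
  set K : ℝ := |Real.log (f b)| + |m| + |M| + χ * (Real.log b + L) with hKdef
  have hK0 : 0 ≤ K := by
    have h1' : 0 ≤ χ * (Real.log b + L) := mul_nonneg hχ (by linarith)
    have := abs_nonneg (Real.log (f b))
    have := abs_nonneg m
    have := abs_nonneg M
    linarith
  -- main estimate for r ≥ α₀ * b
  have main : ∀ r : ℝ, α₀ * b ≤ r →
      |Real.log (f r) - χ * Real.log r| ≤ ε / 4 * Real.log r + K := by
    intro r hr
    have hrb : b < r := lt_of_lt_of_le (lt_mul_of_one_lt_left hbpos hα₀) hr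
    have hrpos : 0 < r := lt_trans hbpos hrb
    have hrb1 : 1 < r / b := (one_lt_div hbpos).mpr hrb
    have hlogrb : 0 < Real.log (r / b) := Real.log_pos hrb1
    set n : ℕ := ⌊Real.log (r / b) / L⌋₊ with hndef
    have hfl1 : (n : ℝ) ≤ Real.log (r / b) / L :=
      Nat.floor_le (by positivity)
    have hfl2 : Real.log (r / b) / L < (n : ℝ) + 1 := Nat.lt_floor_add_one _
    have hnL1' : (n : ℝ) * L ≤ Real.log (r / b) := by
      calc (n : ℝ) * L ≤ Real.log (r / b) / L * L := by
            exact mul_le_mul_of_nonneg_right hfl1 hLpos.le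
        _ = Real.log (r / b) := by field_simp
    have hnL2 : Real.log (r / b) < ((n : ℝ) + 1) * L := by
      calc Real.log (r / b) = Real.log (r / b) / L * L := by field_simp
        _ < ((n : ℝ) + 1) * L := by
            exact mul_lt_mul_of_pos_right hfl2 hLpos
    have hpowpos : (0 : ℝ) < α₀ ^ n := pow_pos hα₀pos n
    have hlogpow : Real.log (α₀ ^ n) = (n : ℝ) * L := by
      rw [Real.log_pow]
    set s : ℝ := r / α₀ ^ n with hsdef
    have hspos : 0 < s := div_pos hrpos hpowpos
    have hrs : α₀ ^ n * s = r := by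
      rw [hsdef]; field_simp
    have hlogs : Real.log s = Real.log r - (n : ℝ) * L := by
      rw [hsdef, Real.log_div hrpos.ne' hpowpos.ne', hlogpow]
    have hlogrb' : Real.log (r / b) = Real.log r - Real.log b :=
      Real.log_div hrpos.ne' hbpos.ne'
    have hbs : b ≤ s := by
      have h1' : Real.log b ≤ Real.log s := by
        rw [hlogs]; rw [hlogrb'] at hnL1'; linarith
      have := Real.exp_le_exp.mpr h1'
      rwa [Real.exp_log hbpos, Real.exp_log hspos] at this
    have hsαb : s ≤ α₀ * b := by
      have h1' : Real.log s ≤ Real.log (α₀ * b) := by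
        rw [hlogs, Real.log_mul hα₀pos.ne' hbpos.ne']
        rw [hlogrb'] at hnL2; linarith
      have := Real.exp_le_exp.mpr h1'
      rwa [Real.exp_log hspos, Real.exp_log (by positivity)] at this
    -- bounds on log f s - log f b
    have hαs1 : (1 : ℝ) ≤ s / b := (one_le_div hbpos).mpr hbs
    have hαs2 : s / b ≤ α₀ := by
      rw [div_le_iff₀ hbpos]; linarith
    have hsb : s / b * b = s := by field_simp
    have hm' := Hm b hbr₁ (s / b) hαs1 hαs2
    have hM' := HM b hbr₂ (s / b) hαs1 hαs2
    rw [hsb] at hm' hM'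
    -- bound |log f s - χ log s| ≤ K
    have hlogs1 : Real.log b ≤ Real.log s := Real.log_le_log hbpos hbs
    have hlogs2 : Real.log s ≤ Real.log b + L := by
      have := Real.log_le_log hspos hsαb
      rwa [Real.log_mul hα₀pos.ne' hbpos.ne', add_comm] at this
    have hχs1 : χ * Real.log s ≤ χ * (Real.log b + L) :=
      mul_le_mul_of_nonneg_left hlogs2 hχ
    have hχs0 : 0 ≤ χ * Real.log s := mul_nonneg hχ (le_trans hlogb hlogs1)
    have hfsK : |Real.log (f s) - χ * Real.log s| ≤ K := by
      rw [abs_le]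
      constructor
      · have h1a := neg_abs_le m
        have h2a := neg_abs_le (Real.log (f b))
        have h3a := abs_nonneg M
        rw [hKdef]; linarith
      · have h1a := le_abs_self M
        have h2a := le_abs_self (Real.log (f b))
        have h3a := abs_nonneg m
        rw [hKdef]; linarith
    -- telescoping
    have htel := tel n s hbs
    rw [hrs] at htel
    have hnLr : (n : ℝ) * L = Real.log r - Real.log s := by rw [hlogs]; ring
    have hnL0 : 0 ≤ (n : ℝ) * L := by positivity
    have hnLle : (n : ℝ) * L ≤ Real.log r := by
      rw [hnLr]; linarith
    have hA := abs_le.mp htel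
    have hfs := abs_le.mp hfsK
    have hprod : (n : ℝ) * L * χ = χ * Real.log r - χ * Real.log s := by
      calc (n : ℝ) * L * χ = (Real.log r - Real.log s) * χ := by rw [hnLr]
        _ = χ * Real.log r - χ * Real.log s := by ring
    have hεb : (n : ℝ) * L * (ε / 4) ≤ ε / 4 * Real.log r := by
      calc (n : ℝ) * L * (ε / 4) ≤ Real.log r * (ε / 4) :=
            mul_le_mul_of_nonneg_right hnLle (by linarith)
        _ = ε / 4 * Real.log r := by ring
    rw [abs_le]
    constructor
    · linarith [hA.1, hfs.1]
    · linarith [hA.2, hfs.2]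
  -- conclusion
  set R : ℝ := max (α₀ * b) (Real.exp (2 * (K + 1) / ε + 1)) with hRdef
  refine ⟨R, fun r hr => ?_⟩
  have hr1 : α₀ * b ≤ r := le_trans (le_max_left _ _) hr
  have hrpos : 0 < r := lt_of_lt_of_le (by positivity) hr1
  have hlogr : 2 * (K + 1) / ε + 1 ≤ Real.log r := by
    have h1' : Real.exp (2 * (K + 1) / ε + 1) ≤ r := le_trans (le_max_right _ _) hr
    calc 2 * (K + 1) / ε + 1 = Real.log (Real.exp (2 * (K + 1) / ε + 1)) := by
          rw [Real.log_exp]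
      _ ≤ Real.log r := Real.log_le_log (Real.exp_pos _) h1'
  have hlogrpos : 0 < Real.log r := by
    have : 0 ≤ 2 * (K + 1) / ε := by positivity
    linarith
  have hmain := main r hr1
  have hKr : K / Real.log r < ε / 2 := by
    rw [div_lt_iff₀ hlogrpos]
    have h2' : 2 * (K + 1) / ε ≤ Real.log r := by linarith
    have h3' : 2 * (K + 1) ≤ ε * Real.log r := by
      rw [div_le_iff₀ hε] at h2'; linarith
    nlinarith
  rw [Real.dist_eq]
  have hdiv : Real.log (f r) / Real.log r - χ
      = (Real.log (f r) - χ * Real.log r) / Real.log r := by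
    field_simp
  rw [hdiv, abs_div, abs_of_pos hlogrpos]
  calc |Real.log (f r) - χ * Real.log r| / Real.log r
      ≤ (ε / 4 * Real.log r + K) / Real.log r := by
        gcongr
    _ = ε / 4 + K / Real.log r := by
        field_simp
    _ < ε / 4 + ε / 2 := by linarith
    _ < ε := by linarith
end

section
/- Let g be a norm on ℝ^d, B = {u : g(u) ≤ 1} its unit ball, θ a unit vector, and y the point of ∂B in direction θ. Assume there exist c₅, c₆, ε₀ > 0 such that for u in the tangent hyperplane H₁ to B at y (translate of a supporting hyperplane) with |u − y| ≤ ε₀: 1 + c₆|u − y|² ≤ g(u) ≤ 1 + c₅|u − y|². Then there exist a neighborhood U of y in H₁ and a constant C such that for all u, v ∈ U: |g(v) − g(u)| ≤ C·|v − u|·(|u − y| + |v − y|). -/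
set_option maxHeartbeats 1000000


/-- inequality (4.3) of Lemma 4.1: under two-sided quadratic
curvature of the norm `g` at `y = y_θ` in the tangent hyperplane, `g` satisfies
the Lipschitz-type bound `|g(v) - g(u)| ≤ C |v - u| (|u - y| + |v - y|)`
on a neighborhood of `y` in the tangent hyperplane. -/
theorem gsmooth_on_tangent_hyperplane {d : ℕ}
    (g : EuclideanSpace ℝ (Fin d) → ℝ)
    (hg0 : ∀ u, 0 ≤ g u)
    (hgadd : ∀ u v, g (u + v) ≤ g u + g v)
    (hgsmul : ∀ (t : ℝ) u, g (t • u) = |t| * g u)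
    (hgdef : ∀ u, g u = 0 → u = 0)
    (θ : EuclideanSpace ℝ (Fin d)) (hθ : ‖θ‖ = 1) (hgθ : 0 < g θ)
    (y : EuclideanSpace ℝ (Fin d)) (hydef : y = (g θ)⁻¹ • θ)
    (φ : EuclideanSpace ℝ (Fin d) →ₗ[ℝ] ℝ) (hφ : φ ≠ 0)
    (hsupp : ∀ u, g u ≤ 1 → φ u ≤ φ y)
    (c₅ c₆ ε₀ : ℝ) (hc₅ : 0 < c₅) (hc₆ : 0 < c₆) (hε₀ : 0 < ε₀)
    (hcurv : ∀ u, φ (u - y) = 0 → ‖u - y‖ ≤ ε₀ →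
      1 + c₆ * ‖u - y‖ ^ 2 ≤ g u ∧ g u ≤ 1 + c₅ * ‖u - y‖ ^ 2) :
    ∃ ρ : ℝ, 0 < ρ ∧ ∃ C : ℝ, ∀ u v,
      φ (u - y) = 0 → φ (v - y) = 0 → ‖u - y‖ < ρ → ‖v - y‖ < ρ →
      |g v - g u| ≤ C * ‖v - u‖ * (‖u - y‖ + ‖v - y‖) := by
  have hρpos : 0 < ε₀ / 2 := by linarith
  refine ⟨ε₀ / 2, hρpos, 4 * c₅, ?_⟩
  have hgy : g y = 1 := by
    have h := hcurv y (by simp) (by simp [hε₀.le])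
    simp only [sub_self, norm_zero] at h
    nlinarith [h.1, h.2]
  have key : ∀ u v, φ (u - y) = 0 → φ (v - y) = 0 → ‖u - y‖ < ε₀ / 2 →
      ‖v - y‖ < ε₀ / 2 → g v - g u ≤ 4 * c₅ * ‖v - u‖ * ‖v - y‖ := by
    intro u v hu hv hun hvn
    have ha0 : (0:ℝ) ≤ ‖u - y‖ := norm_nonneg _
    have hb0 : (0:ℝ) ≤ ‖v - y‖ := norm_nonneg _
    have ht0 : (0:ℝ) ≤ ‖v - u‖ := norm_nonneg _
    have hgu1 : 1 ≤ g u := by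
      have h := (hcurv u hu (by linarith)).1
      nlinarith [sq_nonneg ‖u - y‖]
    rcases eq_or_lt_of_le hb0 with hb | hb
    · -- v = y
      have hvy : v = y := by
        have : v - y = 0 := by
          rw [← norm_eq_zero]; exact hb.symm
        have := sub_eq_zero.mp this; exact this
      rw [hvy, hgy]
      simp only [sub_self, norm_zero, mul_zero]
      linarith
    rcases eq_or_lt_of_le ht0 with ht | ht
    · -- u = v
      have huv : v = u := by
        have : v - u = 0 := by
          rw [← norm_eq_zero]; exact ht.symm
        exact sub_eq_zero.mp this
      rw [huv]
      simp only [sub_self, norm_zero, mul_zero, zero_mul]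
      positivity
    -- main case
    set a := ‖u - y‖ with hadef
    set b := ‖v - y‖ with hbdef
    set t := ‖v - u‖ with htdef
    have htb : 0 < t + b := by linarith
    set lam := t / (t + b) with hlamdef
    have hlam0 : 0 ≤ lam := by positivity
    have hlam1 : lam ≤ 1 := by rw [div_le_one htb]; linarith
    set w := v + (b / t) • (v - u) with hwdef
    have hcomb : (1 - lam) • u + lam • w = v := by
      rw [hwdef, hlamdef]
      match_scalars <;> field_simp <;> ring
    have hwy : w - y = (v - y) + (b / t) • (v - u) := by
      rw [hwdef]; abel
    have hwynorm : ‖w - y‖ ≤ 2 * b := by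
      rw [hwy]
      calc ‖(v - y) + (b / t) • (v - u)‖ ≤ ‖v - y‖ + ‖(b / t) • (v - u)‖ :=
            norm_add_le _ _
        _ = b + (b / t) * t := by
            rw [norm_smul, Real.norm_eq_abs, abs_of_nonneg (by positivity)]
        _ = 2 * b := by field_simp; ring
    have hvu : φ (v - u) = 0 := by
      have h : v - u = (v - y) - (u - y) := by abel
      rw [h, map_sub, hu, hv, sub_zero]
    have hφw : φ (w - y) = 0 := by
      rw [hwy, map_add, map_smul, hv, hvu, smul_zero, add_zero]
    have hgw : g w ≤ 1 + 4 * c₅ * b ^ 2 := by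
      have h := (hcurv w hφw (by linarith)).2
      have hsq : ‖w - y‖ ^ 2 ≤ (2 * b) ^ 2 :=
        pow_le_pow_left₀ (norm_nonneg _) hwynorm 2
      nlinarith
    have hconv : g v ≤ (1 - lam) * g u + lam * g w := by
      calc g v = g ((1 - lam) • u + lam • w) := by rw [hcomb]
        _ ≤ g ((1 - lam) • u) + g (lam • w) := hgadd _ _
        _ = (1 - lam) * g u + lam * g w := by
            rw [hgsmul, hgsmul, abs_of_nonneg hlam0,
              abs_of_nonneg (by linarith)]
    -- g v - g u ≤ lam * (g w - g u) ≤ lam * 4 c₅ b² ≤ 4 c₅ t b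
    have hlamb : lam * b ≤ t := by
      rw [hlamdef, div_mul_eq_mul_div, div_le_iff₀ htb]
      nlinarith
    nlinarith [mul_le_mul_of_nonneg_left hgw hlam0,
      mul_le_mul_of_nonneg_left hgu1 hlam0,
      mul_le_mul_of_nonneg_left hlamb (by positivity : (0:ℝ) ≤ 4 * c₅ * b)]
  intro u v hu hv hun hvn
  have h1 := key u v hu hv hun hvn
  have h2 := key v u hv hu hvn hun
  rw [norm_sub_rev u v] at h2
  rw [abs_sub_le_iff]
  constructor <;> nlinarith [norm_nonneg (v - u), norm_nonneg (u - y),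
    norm_nonneg (v - y), mul_nonneg (norm_nonneg (v - u)) (norm_nonneg (u - y)),
    mul_nonneg (norm_nonneg (v - u)) (norm_nonneg (v - y))]
end

section
/- Let B ⊂ ℝ^d be a compact convex body with 0 in its interior, y ∈ ∂B, H the tangent hyperplane at y (a supporting hyperplane translated to pass through y), and φ a unit vector pointing from the H-side of B into the halfspace containing B's interior, making an angle at least β > 0 with H. For u ∈ H near y, let f(u) = |u − p(u)| where p(u) ∈ ∂B is the intersection with ∂B of the line through u in direction −φ. Assume f(u) ≤ c₅|u − y|² for all u ∈ H with |u − y| ≤ ε₀. Then there is a neighborhood U of y in H and a constant C = C(β, c₅) such that |f(v) − f(u)| ≤ C|v − u|(|u − y| + |v − y|) for all u, v ∈ U. -/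
set_option maxHeartbeats 1000000

private lemma aux_sigma (c₅ dw L ε₁ M R₁ h t₀ f₁ f₂ : ℝ)
    (hc₅ : 0 < c₅) (hL : 0 < L) (hdw0 : 0 ≤ dw) (hwL : dw ≤ L) (hwε : dw ≤ ε₁)
    (hL2 : L ≤ 2*ε₁) (hM0 : 0 ≤ M) (hMub : M ≤ dw + R₁) (hR₁ : 0 < R₁)
    (hε₁0 : 0 < ε₁) (hε₁b : ε₁ ≤ 1) (hε₁c : 64*c₅*(3+R₁)*ε₁ ≤ h) (hht₀ : h ≤ t₀)
    (hf₁0 : 0 ≤ f₁) (hf₂0 : 0 ≤ f₂) (hf₁A : f₁ ≤ c₅*(dw+L)^2) (hf₂A : f₂ ≤ c₅*(dw+L)^2) :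
    h/2 ≤ t₀ - (f₁+f₂)/2 + (M/(2*L))*(f₁ - f₂) := by
  set A := c₅*(dw+L)^2 with hA
  have hA0 : 0 ≤ A := by rw [hA]; positivity
  have hA4 : A ≤ 4*c₅*L^2 := by
    rw [hA]
    nlinarith [mul_nonneg hc₅.le (mul_nonneg (sub_nonneg.2 hwL)
      (show (0:ℝ) ≤ 3*L+dw by linarith))]
  have h9 : A ≤ 9*c₅*ε₁^2 := by
    rw [hA]
    nlinarith [mul_nonneg hc₅.le (mul_nonneg (show (0:ℝ) ≤ 3*ε₁ - (dw+L) by linarith)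
      (show (0:ℝ) ≤ 3*ε₁+(dw+L) by linarith))]
  set x := M/(2*L) with hx
  have hx0 : 0 ≤ x := by rw [hx]; positivity
  have hxA : x*A ≤ 2*c₅*L*M := by
    calc x*A ≤ x*(4*c₅*L^2) := mul_le_mul_of_nonneg_left hA4 hx0
    _ = 2*c₅*L*M := by rw [hx]; field_simp; ring
  have hLM : 2*c₅*L*M ≤ 4*c₅*ε₁*(ε₁+R₁) := by
    have h1 : L*M ≤ (2*ε₁)*(ε₁+R₁) :=
      mul_le_mul hL2 (by linarith) hM0 (by linarith)
    have h2 := mul_le_mul_of_nonneg_left h1 (show (0:ℝ) ≤ 2*c₅ by positivity)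
    nlinarith
  have he1 : c₅*ε₁^2 ≤ c₅*ε₁ := by
    nlinarith [mul_nonneg (mul_nonneg hc₅.le hε₁0.le) (sub_nonneg.2 hε₁b)]
  have hfin : A + x*A ≤ h/2 := by nlinarith
  have habs : -(x*A) ≤ x*(f₁-f₂) := by
    have h1 : -A ≤ f₁ - f₂ := by linarith
    calc -(x*A) = x*(-A) := by ring
    _ ≤ x*(f₁-f₂) := mul_le_mul_of_nonneg_left h1 hx0
  have hF0 : (f₁+f₂)/2 ≤ A := by linarith
  linarith

private lemma aux_alpha2 (α L M : ℝ) (hL : 0 < L) (hM0 : 0 ≤ M) (hα0 : 0 < α)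
    (hαub : α ≤ L/(2*(L+M))) : 0 ≤ (1-α)/2 - α*M/(2*L) := by
  rw [le_div_iff₀ (by linarith)] at hαub
  have h1 : α*M/(2*L) ≤ (1-α)/2 ↔ α*M*2 ≤ (1-α)*(2*L) := by
    rw [div_le_div_iff₀ (by linarith) (by norm_num)]
  have h2 : α*M*2 ≤ (1-α)*(2*L) := by nlinarith
  linarith [h1.2 h2]

private lemma aux_ab (L M ε₁ R₁ : ℝ) (hL : 0 < L) (h : L + M ≤ 3*ε₁+R₁) :
    L*(2*(L+M)) ≤ L*(2*(3*ε₁+R₁)) :=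
  mul_le_mul_of_nonneg_left (by linarith) hL.le

private lemma aux_gapc (c₅ ε₁ R₁ h : ℝ) (hc₅ : 0 < c₅) (hε₁0 : 0 < ε₁) (hε₁b : ε₁ ≤ 1)
    (hR₁ : 0 < R₁) (hε₁c : 64*c₅*(3+R₁)*ε₁ ≤ h) : 6*c₅*ε₁ < h/(2*(2*(3*ε₁+R₁))) := by
  rw [lt_div_iff₀ (by positivity)]
  have he1 : c₅*ε₁^2 ≤ c₅*ε₁ := by
    nlinarith [mul_nonneg (mul_nonneg hc₅.le hε₁0.le) (sub_nonneg.2 hε₁b)]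
  nlinarith [mul_pos (mul_pos hc₅ hε₁0) hR₁, mul_pos hc₅ hε₁0]

private lemma aux_gap (c₅ c₆ ε₁ dd η : ℝ) (hc₅ : 0 < c₅) (hdd : 0 ≤ dd) (hddε : dd ≤ ε₁)
    (hη0 : 0 < η) (hηε : η ≤ ε₁) (hgapc : 6*c₅*ε₁ < c₆) :
    c₅*(2*dd+η)^2 < c₆*(dd+η) := by
  have h1 : (2*dd+η)^2 ≤ (2*(dd+η))*(3*ε₁) := by
    nlinarith [mul_nonneg hdd (sub_nonneg.2 hddε), mul_nonneg hη0.le (sub_nonneg.2 hddε),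
      mul_nonneg hη0.le (sub_nonneg.2 hηε)]
  have h2 : c₅*(2*dd+η)^2 ≤ c₅*((2*(dd+η))*(3*ε₁)) := mul_le_mul_of_nonneg_left h1 hc₅.le
  have h3 : c₅*((2*(dd+η))*(3*ε₁)) = (6*c₅*ε₁)*(dd+η) := by ring
  have h4 : (6*c₅*ε₁)*(dd+η) < c₆*(dd+η) := mul_lt_mul_of_pos_right hgapc (by linarith)
  linarith

private lemma aux_num (c₅ fv dv η : ℝ) (h1 : fv ≤ c₅*dv^2) (hc₅ : 0 < c₅) (hdv : 0 ≤ dv)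
    (hη : 0 < η) : fv - c₅*(2*dv+η)^2 ≤ 0 := by
  nlinarith [sq_nonneg dv, mul_nonneg hdv hη.le, sq_nonneg η]

private lemma aux_sq_mono (c₅ x z : ℝ) (hc₅ : 0 < c₅) (hx : 0 ≤ x) (hxz : x ≤ z) :
    c₅*x^2 ≤ c₅*z^2 := mul_le_mul_of_nonneg_left (pow_le_pow_left₀ hx hxz 2) hc₅.le

/-- inequality (4.2) of Lemma 4.1: the "height below the tangent
hyperplane in direction φ" function `f(u) = |u - p(u)|` of a compact convex body
satisfies the Lipschitz-type bound `|f(v) - f(u)| ≤ C |v - u| (|u-y| + |v-y|)`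
near `y`, given the quadratic upper bound `f(u) ≤ c₅ |u - y|²`. -/
theorem height_function_smooth {d : ℕ}
    (B : Set (EuclideanSpace ℝ (Fin d)))
    (hconv : Convex ℝ B) (hcomp : IsCompact B)
    (h0 : (0 : EuclideanSpace ℝ (Fin d)) ∈ interior B)
    (y : EuclideanSpace ℝ (Fin d)) (hy : y ∈ frontier B)
    (n : EuclideanSpace ℝ (Fin d)) (hn : ‖n‖ = 1)
    (hsupp : ∀ u ∈ B, (inner ℝ u n : ℝ) ≤ (inner ℝ y n : ℝ))
    (φv : EuclideanSpace ℝ (Fin d)) (hφv : ‖φv‖ = 1)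
    (β : ℝ) (hβ : 0 < β) (hβ2 : β < Real.pi / 2)
    (hangle : Real.sin β ≤ (inner ℝ φv n : ℝ))
    (c₅ ε₀ : ℝ) (hc₅ : 0 < c₅) (hε₀ : 0 < ε₀)
    (p : EuclideanSpace ℝ (Fin d) → EuclideanSpace ℝ (Fin d))
    (f : EuclideanSpace ℝ (Fin d) → ℝ)
    (hp : ∀ u, (inner ℝ (u - y) n : ℝ) = 0 → ‖u - y‖ ≤ ε₀ →
      p u ∈ frontier B ∧ ∃ t : ℝ, 0 ≤ t ∧ p u = u - t • φv)
    (hf : ∀ u, f u = ‖u - p u‖)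
    (hquad : ∀ u, (inner ℝ (u - y) n : ℝ) = 0 → ‖u - y‖ ≤ ε₀ →
      f u ≤ c₅ * ‖u - y‖ ^ 2) :
    ∃ ρ : ℝ, 0 < ρ ∧ ∃ C : ℝ, ∀ u v,
      (inner ℝ (u - y) n : ℝ) = 0 → (inner ℝ (v - y) n : ℝ) = 0 →
      ‖u - y‖ < ρ → ‖v - y‖ < ρ →
      |f v - f u| ≤ C * ‖v - u‖ * (‖u - y‖ + ‖v - y‖) := by
  classical
  by_cases hE : ∃ e₀ : EuclideanSpace ℝ (Fin d), ‖e₀‖ = 1 ∧ (inner ℝ e₀ n : ℝ) = 0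
  swap
  · refine ⟨1, one_pos, 0, fun u v hu hv _ _ => ?_⟩
    have keyt : ∀ w : EuclideanSpace ℝ (Fin d), (inner ℝ (w - y) n : ℝ) = 0 → w = y := by
      intro w hw
      by_contra hne
      have h1 : w - y ≠ 0 := sub_ne_zero.2 hne
      refine hE ⟨‖w - y‖⁻¹ • (w - y), ?_, ?_⟩
      · rw [norm_smul, norm_inv, norm_norm]
        field_simp [norm_ne_zero_iff.2 h1]
      · rw [real_inner_smul_left, hw, mul_zero]
    rw [keyt u hu, keyt v hv]
    simp
  obtain ⟨e₀, he₀, he₀n⟩ := hE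
  -- Basic facts
  have hBcl : IsClosed B := hcomp.isClosed
  have hclB : closure B = B := hBcl.closure_eq
  have hfrB : frontier B ⊆ B := hBcl.frontier_subset
  have hfrNI : ∀ x ∈ frontier B, x ∉ interior B := by
    intro x hx
    rw [← closure_diff_interior] at hx; exact hx.2
  obtain ⟨r, hrpos, hrball⟩ : ∃ r > 0, Metric.ball (0 : EuclideanSpace ℝ (Fin d)) r ⊆ B := by
    rcases Metric.mem_nhds_iff.1 (mem_interior_iff_mem_nhds.1 h0) with ⟨r, hr, hball⟩
    exact ⟨r, hr, hball⟩
  set h := (inner ℝ y n : ℝ) with hh_def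
  have hypos : 0 < h := by
    have hmem : (r/2) • n ∈ B := by
      apply hrball
      rw [Metric.mem_ball, dist_zero_right, norm_smul, hn, mul_one]
      rw [Real.norm_eq_abs, abs_of_pos (by positivity)]
      linarith
    have h2 := hsupp _ hmem
    rw [real_inner_smul_left, real_inner_self_eq_norm_sq, hn] at h2
    nlinarith
  obtain ⟨R, hR⟩ : ∃ R, ∀ x ∈ B, ‖x‖ ≤ R := hcomp.isBounded.exists_norm_le
  have hyB : y ∈ B := hfrB hy
  have hhy : h ≤ ‖y‖ := by
    have := real_inner_le_norm y n
    rw [hn, mul_one] at this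
    exact this
  have hhR : h ≤ R := le_trans hhy (hR y hyB)
  have hRpos : 0 < R := lt_of_lt_of_le hypos hhR
  have hsβpos : 0 < Real.sin β :=
    Real.sin_pos_of_pos_of_lt_pi hβ (hβ2.trans (half_lt_self Real.pi_pos))
  set c := (inner ℝ φv n : ℝ) with hc_def
  have hc1 : c ≤ 1 := by
    have := real_inner_le_norm φv n
    rw [hφv, hn, mul_one] at this
    exact this
  have hcpos : 0 < c := lt_of_lt_of_le hsβpos hangle
  set t₀ := h / c with ht₀_def
  have ht₀pos : 0 < t₀ := div_pos hypos hcpos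
  have hht₀ : h ≤ t₀ := by
    rw [ht₀_def, le_div_iff₀ hcpos]; nlinarith
  have ht₀R : t₀ ≤ R / Real.sin β := div_le_div₀ (le_of_lt hRpos) hhR hsβpos hangle
  set π0 := t₀ • φv with hπ0_def
  have hπ0n : (inner ℝ π0 n : ℝ) = h := by
    rw [hπ0_def, real_inner_smul_left, ← hc_def, ht₀_def, div_mul_cancel₀ _ (ne_of_gt hcpos)]
  set R₁ := R + R / Real.sin β with hR₁_def
  have hR₁pos : 0 < R₁ := by positivity
  have hyπ0 : ‖y - π0‖ ≤ R₁ := by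
    calc ‖y - π0‖ ≤ ‖y‖ + ‖π0‖ := norm_sub_le _ _
    _ ≤ R + R / Real.sin β := by
        rw [hπ0_def, norm_smul, hφv, mul_one, Real.norm_eq_abs, abs_of_pos ht₀pos]
        exact add_le_add (hR y hyB) ht₀R
  set ε₁ := min (ε₀/3) (min 1 (h/(64*c₅*(3+R₁)))) with hε₁_def
  have hε₁pos : 0 < ε₁ := by
    apply lt_min (by positivity)
    exact lt_min one_pos (by positivity)
  have hε₁a : 3*ε₁ ≤ ε₀ := by
    have := min_le_left (ε₀/3) (min 1 (h/(64*c₅*(3+R₁))))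
    rw [← hε₁_def] at this; linarith
  have hε₁b : ε₁ ≤ 1 := by
    have := le_trans (min_le_right (ε₀/3) _) (min_le_left 1 (h/(64*c₅*(3+R₁))))
    rw [← hε₁_def] at this; linarith
  have hε₁c : 64*c₅*(3+R₁)*ε₁ ≤ h := by
    have h1 := le_trans (min_le_right (ε₀/3) _) (min_le_right 1 (h/(64*c₅*(3+R₁))))
    rw [← hε₁_def] at h1
    rw [le_div_iff₀ (by positivity)] at h1
    linarith
  set K := 2*(3*ε₁+R₁) with hK_def
  have hKpos : 0 < K := by positivity
  set c₆ := h/(2*K) with hc₆_def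
  have hc₆pos : 0 < c₆ := by positivity
  -- packaged facts about p and f
  have fp : ∀ w : EuclideanSpace ℝ (Fin d), (inner ℝ (w - y) n : ℝ) = 0 → ‖w - y‖ ≤ ε₀ →
      p w = w - (f w) • φv ∧ 0 ≤ f w ∧ f w ≤ c₅ * ‖w - y‖^2 ∧ p w ∈ frontier B := by
    intro w hw1 hw2
    obtain ⟨hfr, t, ht0, hpt⟩ := hp w hw1 hw2
    have hft : f w = t := by
      rw [hf w, hpt, sub_sub_cancel, norm_smul, hφv, mul_one, Real.norm_eq_abs,
        abs_of_nonneg ht0]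
    refine ⟨by rw [hpt, hft], hft ▸ ht0, hquad w hw1 hw2, hfr⟩
  -- key dichotomy lemma
  have key : ∀ (w : EuclideanSpace ℝ (Fin d)) (L s' : ℝ),
      (inner ℝ (w - y) n : ℝ) = 0 → 0 < L → ‖w - y‖ ≤ ε₁ → ‖w - y‖ ≤ L → L ≤ 2*ε₁ →
      0 ≤ s' → (w - s' • φv) ∉ interior B →
      s' ≤ c₅ * (‖w - y‖ + L)^2 ∨ c₆ * L ≤ s' := by
    intro w L s' hwH hL hwε hwL hL2 hs' hq
    by_contra hcon
    push_neg at hcon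
    obtain ⟨hlow, hhigh⟩ := hcon
    set dw := ‖w - y‖ with hdw_def
    have hdw0 : 0 ≤ dw := norm_nonneg _
    set M := ‖w - π0‖ with hM_def
    have hM0 : 0 ≤ M := norm_nonneg _
    have hwπn : (inner ℝ (w - π0) n : ℝ) = 0 := by
      rw [inner_sub_left, hπ0n]
      rw [inner_sub_left] at hwH
      linarith
    obtain ⟨e, he1, heN, heM⟩ : ∃ e : EuclideanSpace ℝ (Fin d),
        ‖e‖ = 1 ∧ (inner ℝ e n : ℝ) = 0 ∧ w - π0 = M • e := by
      by_cases hwp : w = π0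
      · refine ⟨e₀, he₀, he₀n, ?_⟩
        rw [hM_def, hwp, sub_self, norm_zero, zero_smul]
      · have hne : w - π0 ≠ 0 := sub_ne_zero.2 hwp
        have hMpos : 0 < M := by rw [hM_def]; exact norm_pos_iff.2 hne
        refine ⟨M⁻¹ • (w - π0), ?_, ?_, ?_⟩
        · rw [norm_smul, norm_inv, Real.norm_eq_abs, abs_of_pos hMpos, ← hM_def]
          field_simp
        · rw [real_inner_smul_left, hwπn, mul_zero]
        · rw [smul_smul, mul_inv_cancel₀ (ne_of_gt hMpos), one_smul]
    have hMub : M ≤ dw + R₁ := by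
      calc M = ‖(w - y) + (y - π0)‖ := by rw [hM_def, sub_add_sub_cancel]
      _ ≤ ‖w - y‖ + ‖y - π0‖ := norm_add_le _ _
      _ ≤ dw + R₁ := add_le_add le_rfl hyπ0
    set w₁ := w + L • e with hw₁_def
    set w₂ := w - L • e with hw₂_def
    have hw₁H : (inner ℝ (w₁ - y) n : ℝ) = 0 := by
      have : w₁ - y = (w - y) + L • e := by rw [hw₁_def]; abel
      rw [this, inner_add_left, hwH, real_inner_smul_left, heN]; ring
    have hw₂H : (inner ℝ (w₂ - y) n : ℝ) = 0 := by
      have : w₂ - y = (w - y) - L • e := by rw [hw₂_def]; abel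
      rw [this, inner_sub_left, hwH, real_inner_smul_left, heN]; ring
    have hLe_norm : ‖L • e‖ = L := by
      rw [norm_smul, he1, mul_one, Real.norm_eq_abs, abs_of_pos hL]
    have hw₁ε : ‖w₁ - y‖ ≤ ε₀ := by
      have h1 : w₁ - y = (w - y) + L • e := by rw [hw₁_def]; abel
      calc ‖w₁ - y‖ ≤ ‖w - y‖ + ‖L • e‖ := by rw [h1]; exact norm_add_le _ _
      _ = dw + L := by rw [hLe_norm, hdw_def]
      _ ≤ ε₁ + 2*ε₁ := add_le_add hwε hL2
      _ ≤ ε₀ := by linarith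
    have hw₂ε : ‖w₂ - y‖ ≤ ε₀ := by
      have h1 : w₂ - y = (w - y) - L • e := by rw [hw₂_def]; abel
      calc ‖w₂ - y‖ ≤ ‖w - y‖ + ‖L • e‖ := by rw [h1]; exact norm_sub_le _ _
      _ = dw + L := by rw [hLe_norm, hdw_def]
      _ ≤ ε₁ + 2*ε₁ := add_le_add hwε hL2
      _ ≤ ε₀ := by linarith
    obtain ⟨hp₁, hf₁0, hf₁q, hfr₁⟩ := fp w₁ hw₁H hw₁ε
    obtain ⟨hp₂, hf₂0, hf₂q, hfr₂⟩ := fp w₂ hw₂H hw₂ε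
    set f₁ := f w₁ with hf₁_def
    set f₂ := f w₂ with hf₂_def
    set A := c₅ * (dw + L)^2 with hA_def
    have hA0 : 0 ≤ A := by positivity
    have hnw₁ : ‖w₁ - y‖ ≤ dw + L := by
      have h1 : w₁ - y = (w - y) + L • e := by rw [hw₁_def]; abel
      calc ‖w₁ - y‖ ≤ ‖w - y‖ + ‖L • e‖ := by rw [h1]; exact norm_add_le _ _
      _ = dw + L := by rw [hLe_norm]
    have hnw₂ : ‖w₂ - y‖ ≤ dw + L := by
      have h1 : w₂ - y = (w - y) - L • e := by rw [hw₂_def]; abel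
      calc ‖w₂ - y‖ ≤ ‖w - y‖ + ‖L • e‖ := by rw [h1]; exact norm_sub_le _ _
      _ = dw + L := by rw [hLe_norm]
    have hf₁A : f₁ ≤ A := by
      refine le_trans hf₁q ?_
      rw [hA_def]
      exact mul_le_mul_of_nonneg_left (pow_le_pow_left₀ (norm_nonneg _) hnw₁ 2) hc₅.le
    have hf₂A : f₂ ≤ A := by
      refine le_trans hf₂q ?_
      rw [hA_def]
      exact mul_le_mul_of_nonneg_left (pow_le_pow_left₀ (norm_nonneg _) hnw₂ 2) hc₅.le
    set F0 := (f₁ + f₂)/2 with hF0_def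
    have hF00 : 0 ≤ F0 := by rw [hF0_def]; linarith
    have hF0A : F0 ≤ A := by rw [hF0_def]; linarith
    set σ := t₀ - F0 + (M/(2*L))*(f₁ - f₂) with hσ_def
    have hσh : h/2 ≤ σ := by
      rw [hσ_def, hF0_def]
      exact aux_sigma c₅ dw L ε₁ M R₁ h t₀ f₁ f₂ hc₅ hL hdw0 hwL hwε hL2 hM0 hMub
        hR₁pos hε₁pos hε₁b hε₁c hht₀ hf₁0 hf₂0 (hA_def ▸ hf₁A) (hA_def ▸ hf₂A)
    -- interior points
    have hint : ∀ α : ℝ, 0 < α → α ≤ L/(2*(L+M)) → w - (F0 + α*σ) • φv ∈ interior B := by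
      intro α hα0 hαub
      have hLM : 0 < L + M := by linarith
      have hαhalf : α ≤ 1/2 := by
        refine le_trans hαub ?_
        rw [div_le_iff₀ (by linarith)]
        linarith
      have h1α : 0 < 1 - α := by linarith
      set α₁ := (1-α)/2 + α*M/(2*L) with hα₁_def
      set α₂ := (1-α)/2 - α*M/(2*L) with hα₂_def
      have hα₁0 : 0 ≤ α₁ := by
        rw [hα₁_def]
        have h1 : (0:ℝ) ≤ α*M/(2*L) := by positivity
        linarith
      have hα₂0 : 0 ≤ α₂ := by
        rw [hα₂_def]
        exact aux_alpha2 α L M hL hM0 hα0 hαub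
      have hsum12 : α₁ + α₂ = 1 - α := by rw [hα₁_def, hα₂_def]; ring
      -- the convex combination
      set z := ((1-α)⁻¹ * α₁) • p w₁ + ((1-α)⁻¹ * α₂) • p w₂ with hz_def
      have hzB : z ∈ B := by
        apply hconv (hfrB hfr₁) (hfrB hfr₂) (by positivity) (by positivity)
        rw [← mul_add, hsum12, inv_mul_cancel₀ h1α.ne']
      have hmem : α • (0 : EuclideanSpace ℝ (Fin d)) + (1-α) • z ∈ interior B :=
        hconv.combo_interior_closure_mem_interior h0 (subset_closure hzB) hα0
          (le_of_lt h1α) (by ring)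
      have hz2 : α • (0 : EuclideanSpace ℝ (Fin d)) + (1-α) • z = α₁ • p w₁ + α₂ • p w₂ := by
        rw [hz_def, smul_zero, zero_add, smul_add, smul_smul, smul_smul,
          mul_inv_cancel_left₀ h1α.ne', mul_inv_cancel_left₀ h1α.ne']
      rw [hz2] at hmem
      have hcoef : α₁*f₁ + α₂*f₂ + α*t₀ = F0 + α*σ := by
        rw [hα₁_def, hα₂_def, hσ_def, hF0_def]
        field_simp
        ring
      have hLecoef : (α₁ - α₂) • (L • e) = α • (w - π0) := by
        rw [heM, smul_smul, smul_smul]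
        congr 1
        rw [hα₁_def, hα₂_def]
        field_simp
        ring
      have hpt_eq : α₁ • p w₁ + α₂ • p w₂ = w - (F0 + α*σ) • φv := by
        rw [hp₁, hp₂, ← hcoef]
        have expand : α₁ • (w₁ - f₁ • φv) + α₂ • (w₂ - f₂ • φv)
            = (α₁ + α₂) • w + (α₁ - α₂) • (L • e) - (α₁*f₁ + α₂*f₂) • φv := by
          rw [hw₁_def, hw₂_def]; module
        rw [expand, hLecoef, hsum12, hπ0_def]
        module
      rw [hpt_eq] at hmem
      exact hmem
    -- now derive contradiction
    set αb := L/(2*(L+M)) with hαb_def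
    have hLM : 0 < L + M := by linarith
    have hαb0 : 0 < αb := by rw [hαb_def]; positivity
    have hσpos : 0 < σ := lt_of_lt_of_le (by positivity) hσh
    have hαbK : L/K ≤ αb := by
      rw [hαb_def, div_le_div_iff₀ hKpos (by linarith)]
      rw [hK_def]
      exact aux_ab L M ε₁ R₁ hL (by linarith)
    have hc₆αb : c₆ * L ≤ F0 + αb * σ := by
      have h1 : (L/K) * (h/2) ≤ αb * σ :=
        mul_le_mul hαbK hσh (by linarith) (le_of_lt hαb0)
      have h2 : (L/K) * (h/2) = c₆ * L := by rw [hc₆_def]; field_simp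
      calc c₆ * L = (L/K) * (h/2) := h2.symm
      _ ≤ αb * σ := h1
      _ ≤ F0 + αb * σ := le_add_of_nonneg_left hF00
    set α := (s' - F0)/σ with hα_def
    have hα0 : 0 < α := by
      rw [hα_def]
      apply div_pos _ hσpos
      have : F0 ≤ A := hF0A
      linarith
    have hααb : α ≤ αb := by
      rw [hα_def, div_le_iff₀ hσpos]
      have : s' ≤ F0 + αb * σ := le_trans (le_of_lt hhigh) hc₆αb
      linarith
    have hFα : F0 + α*σ = s' := by
      rw [hα_def, div_mul_cancel₀ _ hσpos.ne']
      ring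
    have := hint α hα0 hααb
    rw [hFα] at this
    exact hq this
  set ρ₀ := ε₁/3 with hρ₀_def
  have hρ₀pos : 0 < ρ₀ := by positivity
  have hρ₀ε₀ : ρ₀ ≤ ε₀ := by rw [hρ₀_def]; linarith
  have hgapc : 6*c₅*ε₁ < c₆ := by
    rw [hc₆_def, hK_def]
    exact aux_gapc c₅ ε₁ R₁ h hc₅ hε₁pos hε₁b hR₁pos hε₁c
  have helper : ∀ u v : EuclideanSpace ℝ (Fin d),
      (inner ℝ (u - y) n : ℝ) = 0 → (inner ℝ (v - y) n : ℝ) = 0 →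
      ‖u - y‖ < ρ₀ → ‖v - y‖ < ρ₀ →
      f v - f u ≤ 16*c₅*‖v - u‖*(‖u - y‖ + ‖v - y‖) := by
    intro u v huH hvH huρ hvρ
    by_cases hΔ0 : f v - f u ≤ 0
    · exact le_trans hΔ0 (by positivity)
    push_neg at hΔ0
    rcases eq_or_ne u v with rfl | hne
    · simp at hΔ0
    have hδ : 0 < ‖v - u‖ := by rw [norm_pos_iff]; exact sub_ne_zero.2 hne.symm
    set S := ‖u - y‖ + ‖v - y‖ with hS_def
    have hSpos : 0 < S := by
      by_contra hS0
      push_neg at hS0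
      have h1 : ‖u - y‖ = 0 := le_antisymm (by
        have := norm_nonneg (v - y); rw [hS_def] at hS0; linarith) (norm_nonneg _)
      have h2 : ‖v - y‖ = 0 := le_antisymm (by
        have := norm_nonneg (u - y); rw [hS_def] at hS0; linarith) (norm_nonneg _)
      rw [norm_eq_zero, sub_eq_zero] at h1 h2
      exact hne (h1.trans h2.symm)
    have huε₀ : ‖u - y‖ ≤ ε₀ := le_trans huρ.le hρ₀ε₀
    have hvε₀ : ‖v - y‖ ≤ ε₀ := le_trans hvρ.le hρ₀ε₀
    obtain ⟨hpu, hfu0, hfuq, hfru⟩ := fp u huH huε₀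
    obtain ⟨hpv, hfv0, hfvq, hfrv⟩ := fp v hvH hvε₀
    set μs := S/‖v - u‖ with hμs_def
    have hμspos : 0 < μs := by positivity
    have hvuN : (inner ℝ (v - u) n : ℝ) = 0 := by
      have h1 : v - u = (v - y) - (u - y) := by abel
      rw [h1, inner_sub_left, hvH, huH]; ring
    have hwμH : ∀ μ : ℝ, (inner ℝ ((v + μ • (v - u)) - y) n : ℝ) = 0 := by
      intro μ
      have h1 : (v + μ • (v - u)) - y = (v - y) + μ • (v - u) := by abel
      rw [h1, inner_add_left, hvH, real_inner_smul_left, hvuN]; ring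
    have hray : ∀ μ : ℝ, 0 ≤ μ →
        (v + μ • (v - u)) - (f v + μ*(f v - f u)) • φv ∉ interior B := by
      intro μ hμ hmem
      have hq_eq : (v + μ • (v - u)) - (f v + μ*(f v - f u)) • φv
          = p u + (1+μ) • (p v - p u) := by
        rw [hpu, hpv]; module
      rw [hq_eq] at hmem
      have h1μ : (0:ℝ) < 1 + μ := by linarith
      have hcomb := hconv.combo_interior_closure_mem_interior hmem
        (subset_closure (hfrB hfru)) (show (0:ℝ) < 1/(1+μ) by positivity)
        (show (0:ℝ) ≤ μ/(1+μ) by positivity)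
        (by field_simp)
      have hne1μ : (1:ℝ)+μ ≠ 0 := by positivity
      have heq : (1/(1+μ)) • (p u + (1+μ) • (p v - p u)) + (μ/(1+μ)) • p u = p v := by
        match_scalars <;> field_simp <;> ring
      rw [heq] at hcomb
      exact hfrNI _ hfrv hcomb
    have hd_ub : ∀ μ : ℝ, 0 ≤ μ → μ ≤ μs → ‖v + μ • (v - u) - y‖ ≤ ‖v - y‖ + S := by
      intro μ h0μ hμμs
      have h1 : v + μ • (v - u) - y = (v - y) + μ • (v - u) := by abel
      calc ‖v + μ • (v - u) - y‖ = ‖(v - y) + μ • (v - u)‖ := by rw [h1]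
      _ ≤ ‖v - y‖ + ‖μ • (v - u)‖ := norm_add_le _ _
      _ = ‖v - y‖ + μ*‖v - u‖ := by
          rw [norm_smul, Real.norm_eq_abs, abs_of_nonneg h0μ]
      _ ≤ ‖v - y‖ + S := by
          have h2 : μ*‖v - u‖ ≤ S := by
            rw [hμs_def] at hμμs
            exact (le_div_iff₀ hδ).1 hμμs
          linarith
    have hdS : ‖v - y‖ + S < ε₁ := by
      have : S < 2*ρ₀ := by rw [hS_def]; linarith
      rw [hρ₀_def] at hvρ this
      linarith
    -- the dichotomy, for each η
    have hstep : ∀ η : ℝ, 0 < η → η ≤ ε₁ →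
        f v + μs*(f v - f u) ≤ c₅*(4*S+η)^2 := by
      intro η hη0 hηε
      have hdich : ∀ μ ∈ Set.Icc (0:ℝ) μs,
          f v + μ*(f v - f u) ≤ c₅*(2*‖v + μ • (v - u) - y‖+η)^2 ∨
          c₆*(‖v + μ • (v - u) - y‖+η) ≤ f v + μ*(f v - f u) := by
        intro μ hμ
        have hdd : ‖v + μ • (v - u) - y‖ ≤ ε₁ :=
          le_of_lt (lt_of_le_of_lt (hd_ub μ hμ.1 hμ.2) hdS)
        have hk := key (v + μ • (v - u)) (‖v + μ • (v - u) - y‖ + η)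
          (f v + μ*(f v - f u)) (hwμH μ) (by positivity) hdd (by linarith)
          (by linarith) (by have h9 := mul_nonneg hμ.1 hΔ0.le; linarith) (hray μ hμ.1)
        have harith : ‖v + μ • (v - u) - y‖ + (‖v + μ • (v - u) - y‖ + η)
            = 2*‖v + μ • (v - u) - y‖ + η := by ring
        rw [harith] at hk
        exact hk
      have hgap : ∀ μ ∈ Set.Icc (0:ℝ) μs,
          c₅*(2*‖v + μ • (v - u) - y‖+η)^2 < c₆*(‖v + μ • (v - u) - y‖+η) := by
        intro μ hμ
        exact aux_gap c₅ c₆ ε₁ _ η hc₅ (norm_nonneg _)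
          (le_of_lt (lt_of_le_of_lt (hd_ub μ hμ.1 hμ.2) hdS)) hη0 hηε hgapc
      -- continuity
      have hcont1 : Continuous (fun μ : ℝ => f v + μ*(f v - f u)
          - c₅*(2*‖v + μ • (v - u) - y‖+η)^2) := by fun_prop
      have hcont2 : Continuous (fun μ : ℝ => c₆*(‖v + μ • (v - u) - y‖+η)
          - c₅*(2*‖v + μ • (v - u) - y‖+η)^2) := by fun_prop
      set g : ℝ → ℝ := fun μ : ℝ => (f v + μ*(f v - f u)
          - c₅*(2*‖v + μ • (v - u) - y‖+η)^2) / (c₆*(‖v + μ • (v - u) - y‖+η)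
          - c₅*(2*‖v + μ • (v - u) - y‖+η)^2) with hg_def
      have hgc : ContinuousOn g (Set.Icc 0 μs) :=
        ContinuousOn.div hcont1.continuousOn hcont2.continuousOn
          (fun μ hμ => ne_of_gt (by
            have := hgap μ hμ
            have h2 : f v + μ*(f v - f u) - c₅*(2*‖v + μ • (v - u) - y‖+η)^2 ≤
              f v + μ*(f v - f u) - c₅*(2*‖v + μ • (v - u) - y‖+η)^2 := le_refl _
            linarith))
      -- claim low at μs
      by_contra hcontra
      push_neg at hcontra
      have hAμs : c₅*(2*‖v + μs • (v - u) - y‖+η)^2 ≤ c₅*(4*S+η)^2 := by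
        apply aux_sq_mono c₅ _ _ hc₅ (by positivity)
        have h1 : ‖v + μs • (v - u) - y‖ ≤ ‖v - y‖ + S := hd_ub μs hμspos.le le_rfl
        have h2 : ‖v - y‖ ≤ S := by rw [hS_def]; linarith [norm_nonneg (u - y)]
        linarith
      have hg1 : (1:ℝ) ≤ g μs := by
        show (1:ℝ) ≤ (f v + μs*(f v - f u)
          - c₅*(2*‖v + μs • (v - u) - y‖+η)^2) / (c₆*(‖v + μs • (v - u) - y‖+η)
          - c₅*(2*‖v + μs • (v - u) - y‖+η)^2)
        have hden : 0 < c₆*(‖v + μs • (v - u) - y‖+η)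
            - c₅*(2*‖v + μs • (v - u) - y‖+η)^2 := by
          have := hgap μs ⟨hμspos.le, le_rfl⟩; linarith
        rw [le_div_iff₀ hden]
        have hd2 := hdich μs ⟨hμspos.le, le_rfl⟩
        rcases hd2 with hlo | hhi
        · linarith [le_trans hlo hAμs]
        · linarith
      have hg0 : g 0 ≤ 1/2 := by
        show (f v + 0*(f v - f u)
          - c₅*(2*‖v + (0:ℝ) • (v - u) - y‖+η)^2) / (c₆*(‖v + (0:ℝ) • (v - u) - y‖+η)
          - c₅*(2*‖v + (0:ℝ) • (v - u) - y‖+η)^2) ≤ 1/2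
        have hden : 0 < c₆*(‖v + (0:ℝ) • (v - u) - y‖+η)
            - c₅*(2*‖v + (0:ℝ) • (v - u) - y‖+η)^2 := by
          have := hgap 0 ⟨le_rfl, hμspos.le⟩; linarith
        have hnum : f v + 0*(f v - f u)
            - c₅*(2*‖v + (0:ℝ) • (v - u) - y‖+η)^2 ≤ 0 := by
          have h1 : ‖v + (0:ℝ) • (v - u) - y‖ = ‖v - y‖ := by
            rw [zero_smul, add_zero]
          rw [h1]
          have := aux_num c₅ (f v) (‖v - y‖) η hfvq hc₅ (norm_nonneg _) hη0
          linarith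
        have := div_nonpos_of_nonpos_of_nonneg hnum hden.le
        linarith
      obtain ⟨μc, hμcI, hμceq⟩ := intermediate_value_Icc hμspos.le hgc
        (Set.mem_Icc.2 ⟨hg0, by linarith⟩)
      have hμceq' : (f v + μc*(f v - f u)
          - c₅*(2*‖v + μc • (v - u) - y‖+η)^2) / (c₆*(‖v + μc • (v - u) - y‖+η)
          - c₅*(2*‖v + μc • (v - u) - y‖+η)^2) = 1/2 := hμceq
      have hdenc : 0 < c₆*(‖v + μc • (v - u) - y‖+η)
          - c₅*(2*‖v + μc • (v - u) - y‖+η)^2 := by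
        have := hgap μc hμcI; linarith
      rw [div_eq_iff hdenc.ne'] at hμceq'
      rcases hdich μc hμcI with hlo | hhi
      · linarith
      · linarith
    -- take η → 0
    have hfinal : f v + μs*(f v - f u) ≤ 16*c₅*S^2 := by
      apply le_of_forall_pos_le_add
      intro ε hε
      set η := min ε₁ (ε/(c₅*(8*S+ε₁))) with hη_def
      have hη0 : 0 < η := lt_min hε₁pos (by positivity)
      have hηε₁ : η ≤ ε₁ := min_le_left _ _
      have hη2 : η ≤ ε/(c₅*(8*S+ε₁)) := min_le_right _ _
      calc f v + μs*(f v - f u) ≤ c₅*(4*S+η)^2 := hstep η hη0 hηε₁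
      _ = 16*c₅*S^2 + (c₅*(8*S+η))*η := by ring
      _ ≤ 16*c₅*S^2 + (c₅*(8*S+ε₁))*η := by
          have h1 : c₅*(8*S+η) ≤ c₅*(8*S+ε₁) :=
            mul_le_mul_of_nonneg_left (by linarith) hc₅.le
          exact add_le_add_right (mul_le_mul_of_nonneg_right h1 hη0.le) _
      _ ≤ 16*c₅*S^2 + ε := by
          have h2 : η*(c₅*(8*S+ε₁)) ≤ ε := (le_div_iff₀ (by positivity)).1 hη2
          linarith [h2]
    -- conclude
    have hμsΔ : μs*(f v - f u) ≤ 16*c₅*S^2 := by linarith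
    have hSΔ : S*(f v - f u) ≤ 16*c₅*S^2*‖v - u‖ := by
      have h1 := mul_le_mul_of_nonneg_right hμsΔ hδ.le
      have h2 : μs*(f v - f u)*‖v - u‖ = S*(f v - f u) := by
        rw [hμs_def]; field_simp
      rw [h2] at h1
      linarith
    have hgoal : f v - f u ≤ 16*c₅*‖v - u‖*S := by
      rw [← mul_le_mul_iff_of_pos_left hSpos]
      calc S*(f v - f u) ≤ 16*c₅*S^2*‖v - u‖ := hSΔ
      _ = S*(16*c₅*‖v - u‖*S) := by ring
    exact hgoal
  refine ⟨ρ₀, hρ₀pos, 16*c₅, fun u v huH hvH huρ hvρ => ?_⟩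
  rw [abs_sub_le_iff]
  refine ⟨helper u v huH hvH huρ hvρ, ?_⟩
  have h2 := helper v u hvH huH hvρ huρ
  rw [norm_sub_rev u v] at h2
  linarith
end

section
/- Let g be a norm on ℝ^d that is invariant under permutations of the coordinates and sign changes of the coordinates. Let y ∈ ∂B_g be a point of the unit sphere of g and H a supporting hyperplane to B_g at y. Then the angle between the vector y and the hyperplane H is at least arcsin(1/√d). -/
/-- the arcsin bound: for a lattice-symmetric norm `g` on `ℝ^d`,
the angle between any boundary point `y` of the unit ball and any supporting
hyperplane at `y` is at least `arcsin(1/√d)`; equivalently, the (absolute)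
inner product of `y` with the unit normal `n` is at least `|y|/√d`. -/
theorem arcsin_bound (d : ℕ) (hd : 0 < d) (g : (Fin d → ℝ) → ℝ)
    (hg0 : ∀ u, 0 ≤ g u)
    (hgadd : ∀ u v, g (u + v) ≤ g u + g v)
    (hgsmul : ∀ (t : ℝ) (u : Fin d → ℝ), g (t • u) = |t| * g u)
    (hgdef : ∀ u, g u = 0 → u = 0)
    (hperm : ∀ (σ : Equiv.Perm (Fin d)) (x : Fin d → ℝ),
      g (fun i => x (σ i)) = g x)
    (hsign : ∀ s : Fin d → ℝ, (∀ i, s i = 1 ∨ s i = -1) →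
      ∀ x : Fin d → ℝ, g (fun i => s i * x i) = g x)
    (y n : Fin d → ℝ) (hy : g y = 1)
    (hn : ∑ i, (n i) ^ 2 = 1)
    (hsupp : ∀ u : Fin d → ℝ, g u ≤ 1 → ∑ i, u i * n i ≤ ∑ i, y i * n i) :
    Real.sqrt (∑ i, (y i) ^ 2) / Real.sqrt d ≤ |∑ i, y i * n i| := by
  set c := ∑ i, y i * n i with hc
  set σ := Tuple.sort (fun i => |y i|) with hσ
  set τ := Tuple.sort (fun i => |n i|) with hτ
  set a : Fin d → ℝ := fun i => |y (σ i)| with ha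
  set b : Fin d → ℝ := fun i => |n (τ i)| with hb
  have hamono : Monotone a := Tuple.monotone_sort (fun i => |y i|)
  have hbmono : Monotone b := Tuple.monotone_sort (fun i => |n i|)
  have ha0 : ∀ i, 0 ≤ a i := fun i => abs_nonneg _
  have hb0 : ∀ i, 0 ≤ b i := fun i => abs_nonneg _
  -- the paired permutation
  set π : Equiv.Perm (Fin d) := τ.symm.trans σ with hπ
  set s : Fin d → ℝ := fun j => if y (π j) * n j < 0 then -1 else 1 with hs
  set u : Fin d → ℝ := fun j => s j * y (π j) with hu
  have hgu : g u = 1 := by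
    have h1 : g u = g (fun j => y (π j)) := by
      apply hsign
      intro j
      by_cases h : y (π j) * n j < 0 <;> simp [hs, h]
    have h2 : g (fun j => y (π j)) = g y := hperm π y
    rw [h1, h2, hy]
  have hterm : ∀ j, u j * n j = a (τ.symm j) * b (τ.symm j) := by
    intro j
    have h1 : a (τ.symm j) = |y (π j)| := by simp [ha, hπ]
    have h2 : b (τ.symm j) = |n j| := by simp [hb]
    rw [h1, h2, ← abs_mul]
    show s j * y (π j) * n j = _
    rw [mul_assoc]
    by_cases h : y (π j) * n j < 0
    · rw [abs_of_neg h]; simp [hs, h]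
    · rw [abs_of_nonneg (not_lt.1 h)]; simp [hs, h]
  have hkey : ∑ i, a i * b i ≤ c := by
    have := hsupp u (le_of_eq hgu)
    calc ∑ i, a i * b i = ∑ j, a (τ.symm j) * b (τ.symm j) :=
          (Equiv.sum_comp τ.symm (fun i => a i * b i)).symm
      _ = ∑ j, u j * n j := by simp_rw [hterm]
      _ ≤ c := this
  have hS0 : 0 ≤ ∑ i, a i * b i :=
    Finset.sum_nonneg fun i _ => mul_nonneg (ha0 i) (hb0 i)
  have hc0 : 0 ≤ c := le_trans hS0 hkey
  have hsa : ∑ i, a i ^ 2 = ∑ i, y i ^ 2 := by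
    calc ∑ i, a i ^ 2 = ∑ i, y (σ i) ^ 2 := by simp [ha, sq_abs]
      _ = ∑ i, y i ^ 2 := Equiv.sum_comp σ (fun i => y i ^ 2)
  have hsb : ∑ i, b i ^ 2 = 1 := by
    calc ∑ i, b i ^ 2 = ∑ i, n (τ i) ^ 2 := by simp [hb, sq_abs]
      _ = ∑ i, n i ^ 2 := Equiv.sum_comp τ (fun i => n i ^ 2)
      _ = 1 := hn
  -- Chebyshev
  have hmono : Monovary (fun i => a i ^ 2) (fun i => b i ^ 2) := by
    refine Monotone.monovary ?_ ?_
    · intro i j h; exact pow_le_pow_left₀ (ha0 i) (hamono h) 2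
    · intro i j h; exact pow_le_pow_left₀ (hb0 i) (hbmono h) 2
  have hcheb : (∑ i, a i ^ 2) * (∑ i, b i ^ 2) ≤ d * ∑ i, a i ^ 2 * b i ^ 2 := by
    have := hmono.sum_mul_sum_le_card_mul_sum
    simpa using this
  have hsq : ∑ i, a i ^ 2 * b i ^ 2 ≤ (∑ i, a i * b i) ^ 2 := by
    have h1 : ∑ i, a i ^ 2 * b i ^ 2 = ∑ i, (a i * b i) ^ 2 := by
      congr 1; ext i; ring
    rw [h1]
    exact Finset.sum_sq_le_sq_sum_of_nonneg fun i _ => mul_nonneg (ha0 i) (hb0 i)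
  have hmain : ∑ i, y i ^ 2 ≤ d * c ^ 2 := by
    calc ∑ i, y i ^ 2 = (∑ i, a i ^ 2) * (∑ i, b i ^ 2) := by rw [hsa, hsb, mul_one]
      _ ≤ d * ∑ i, a i ^ 2 * b i ^ 2 := hcheb
      _ ≤ d * (∑ i, a i * b i) ^ 2 := by
          exact mul_le_mul_of_nonneg_left hsq (Nat.cast_nonneg d)
      _ ≤ d * c ^ 2 := by
          exact mul_le_mul_of_nonneg_left (pow_le_pow_left₀ hS0 hkey 2) (Nat.cast_nonneg d)
  have hdpos : (0:ℝ) < Real.sqrt d := Real.sqrt_pos.2 (by exact_mod_cast hd)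
  rw [abs_of_nonneg hc0, div_le_iff₀ hdpos]
  calc Real.sqrt (∑ i, y i ^ 2) ≤ Real.sqrt (d * c ^ 2) := Real.sqrt_le_sqrt hmain
    _ = c * Real.sqrt d := by
        rw [Real.sqrt_mul (Nat.cast_nonneg d), Real.sqrt_sq hc0, mul_comm]
end

section
/- Let g be a norm on ℝ^d, θ a unit vector with y_θ the point of ∂B_g in direction θ, and suppose θ is a direction of sub-curvature: g(u) ≤ 1 + c₅|u − y_θ|² for u in the tangent hyperplane H_{θ,1} at y_θ with |u − y_θ| ≤ ε₀. Let x ∈ ℝ^d satisfy |x/|x| − θ| ≤ g(x)^{−1/6}, let π_θ x denote the tangential θ-projection of x onto the line through 0 and y_θ (projection along H_{θ,0}), and suppose the angle between θ and H_{θ,0} is at least arcsin(1/√d). Then there exist constants c, c' (depending only on g, θ) such that |x − π_θ x| ≤ c·g(x)^{5/6} and |g(x) − g(π_θ x)| ≤ c'·g(x)^{2/3}. -/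
lemma g_zero' {d : ℕ} (g : EuclideanSpace ℝ (Fin d) → ℝ)
    (hgsmul : ∀ (t : ℝ) u, g (t • u) = |t| * g u) : g 0 = 0 := by
  simpa using hgsmul 0 0

lemma g_neg' {d : ℕ} (g : EuclideanSpace ℝ (Fin d) → ℝ)
    (hgsmul : ∀ (t : ℝ) u, g (t • u) = |t| * g u) (u : EuclideanSpace ℝ (Fin d)) :
    g (-u) = g u := by
  simpa using hgsmul (-1) u

lemma g_abs_sub' {d : ℕ} (g : EuclideanSpace ℝ (Fin d) → ℝ)
    (hgadd : ∀ u v, g (u + v) ≤ g u + g v)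
    (hgsmul : ∀ (t : ℝ) u, g (t • u) = |t| * g u)
    (a b : EuclideanSpace ℝ (Fin d)) : |g a - g b| ≤ g (a - b) := by
  rw [abs_sub_le_iff]
  constructor
  · have := hgadd (a - b) b; simpa using this
  · have := hgadd (b - a) a
    have h2 : g (b - a) = g (a - b) := by
      rw [show b - a = -(a - b) by abel, g_neg' g hgsmul]
    simp only [sub_add_cancel] at this
    linarith

lemma g_upper' {d : ℕ} (g : EuclideanSpace ℝ (Fin d) → ℝ)
    (hg0 : ∀ u, 0 ≤ g u)
    (hgadd : ∀ u v, g (u + v) ≤ g u + g v)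
    (hgsmul : ∀ (t : ℝ) u, g (t • u) = |t| * g u) :
    ∃ M : ℝ, 0 < M ∧ ∀ u, g u ≤ M * ‖u‖ := by
  classical
  refine ⟨(∑ i : Fin d, g (EuclideanSpace.single i 1)) + 1, by
    have : 0 ≤ ∑ i : Fin d, g (EuclideanSpace.single i (1:ℝ)) :=
      Finset.sum_nonneg fun i _ => hg0 _
    linarith, fun u => ?_⟩
  have hrep : u = ∑ i : Fin d, u i • EuclideanSpace.single i (1:ℝ) := by
    have h := (EuclideanSpace.basisFun (Fin d) ℝ).sum_repr u
    simp only [EuclideanSpace.basisFun_repr, EuclideanSpace.basisFun_apply] at h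
    exact h.symm
  have hcoord : ∀ i : Fin d, |u i| ≤ ‖u‖ := by
    intro i
    have h := abs_real_inner_le_norm (EuclideanSpace.single i (1:ℝ)) u
    rw [EuclideanSpace.norm_single] at h
    simpa [EuclideanSpace.inner_single_left] using h
  calc g u = g (∑ i : Fin d, u i • EuclideanSpace.single i (1:ℝ)) := by rw [← hrep]
    _ ≤ ∑ i : Fin d, g (u i • EuclideanSpace.single i (1:ℝ)) :=
        Finset.le_sum_of_subadditive g (g_zero' g hgsmul).le hgadd _ _
    _ = ∑ i : Fin d, |u i| * g (EuclideanSpace.single i (1:ℝ)) := by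
        simp [hgsmul]
    _ ≤ ∑ i : Fin d, ‖u‖ * g (EuclideanSpace.single i (1:ℝ)) := by
        refine Finset.sum_le_sum fun i _ => ?_
        exact mul_le_mul_of_nonneg_right (hcoord i) (hg0 _)
    _ = (∑ i : Fin d, g (EuclideanSpace.single i (1:ℝ))) * ‖u‖ := by
        rw [Finset.sum_mul]
        exact Finset.sum_congr rfl fun i _ => mul_comm _ _
    _ ≤ ((∑ i : Fin d, g (EuclideanSpace.single i (1:ℝ))) + 1) * ‖u‖ := by
        have : (0:ℝ) ≤ ‖u‖ := norm_nonneg _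
        nlinarith

lemma g_lower' {d : ℕ} (hd : 0 < d) (g : EuclideanSpace ℝ (Fin d) → ℝ)
    (hg0 : ∀ u, 0 ≤ g u)
    (hgadd : ∀ u v, g (u + v) ≤ g u + g v)
    (hgsmul : ∀ (t : ℝ) u, g (t • u) = |t| * g u)
    (hgdef : ∀ u, g u = 0 → u = 0)
    {M : ℝ} (hM0 : 0 < M) (hM : ∀ u, g u ≤ M * ‖u‖) :
    ∃ m : ℝ, 0 < m ∧ ∀ u, m * ‖u‖ ≤ g u := by
  have hcont : Continuous g := by
    have : LipschitzWith (Real.toNNReal M) g := by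
      refine LipschitzWith.of_dist_le_mul fun a b => ?_
      rw [Real.dist_eq, dist_eq_norm, Real.coe_toNNReal M hM0.le]
      exact (g_abs_sub' g hgadd hgsmul a b).trans (hM _)
    exact this.continuous
  have hne : (Metric.sphere (0 : EuclideanSpace ℝ (Fin d)) 1).Nonempty := by
    refine ⟨EuclideanSpace.single ⟨0, hd⟩ (1:ℝ), ?_⟩
    rw [mem_sphere_zero_iff_norm, EuclideanSpace.norm_single]
    norm_num
  obtain ⟨z, hz, hzmin⟩ := (isCompact_sphere (0 : EuclideanSpace ℝ (Fin d)) 1).exists_isMinOn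
    hne hcont.continuousOn
  rw [mem_sphere_zero_iff_norm] at hz
  have hzne : z ≠ 0 := by intro h; rw [h, norm_zero] at hz; norm_num at hz
  have hmz : 0 < g z := by
    rcases (hg0 z).lt_or_eq with h | h
    · exact h
    · exact absurd (hgdef z h.symm) hzne
  refine ⟨g z, hmz, fun u => ?_⟩
  rcases eq_or_ne u 0 with rfl | hu
  · simp [g_zero' g hgsmul]
  · have hun : 0 < ‖u‖ := norm_pos_iff.2 hu
    have hw : ‖u‖⁻¹ • u ∈ Metric.sphere (0 : EuclideanSpace ℝ (Fin d)) 1 := by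
      rw [mem_sphere_zero_iff_norm, norm_smul, norm_inv, norm_norm]
      field_simp
    have h := hzmin hw
    simp only [Set.mem_setOf_eq] at h
    rw [hgsmul] at h
    rw [abs_of_pos (inv_pos.2 hun)] at h
    have h2 : g z * ‖u‖ ≤ (‖u‖⁻¹ * g u) * ‖u‖ := by nlinarith
    have h3 : (‖u‖⁻¹ * g u) * ‖u‖ = g u := by field_simp
    linarith

set_option maxHeartbeats 1000000 in
/-- estimate (4.36) in Case 1b of Lemma 4.2: for `x` whose
direction is within `g(x)^{-1/6}` of a direction of sub-curvature `θ`, the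
tangential projection `π_θ x = (⟨x,n⟩/⟨y,n⟩) y` satisfies
`|x - π_θ x| ≤ c g(x)^{5/6}` and `|g(x) - g(π_θ x)| ≤ c' g(x)^{2/3}`. -/

theorem tangential_projection_estimates {d : ℕ} (hd : 0 < d)
    (g : EuclideanSpace ℝ (Fin d) → ℝ)
    (hg0 : ∀ u, 0 ≤ g u)
    (hgadd : ∀ u v, g (u + v) ≤ g u + g v)
    (hgsmul : ∀ (t : ℝ) u, g (t • u) = |t| * g u)
    (hgdef : ∀ u, g u = 0 → u = 0)
    (θ : EuclideanSpace ℝ (Fin d)) (hθ : ‖θ‖ = 1) (hgθ : 0 < g θ)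
    (y : EuclideanSpace ℝ (Fin d)) (hydef : y = (g θ)⁻¹ • θ)
    (n : EuclideanSpace ℝ (Fin d)) (hn : ‖n‖ = 1)
    (hsupp : ∀ u, g u ≤ 1 → (inner ℝ u n : ℝ) ≤ (inner ℝ y n : ℝ))
    (harcsin : 1 / Real.sqrt d ≤ |(inner ℝ θ n : ℝ)|)
    (c₅ ε₀ : ℝ) (hc₅ : 0 < c₅) (hε₀ : 0 < ε₀)
    (hsubcurv : ∀ u, (inner ℝ (u - y) n : ℝ) = 0 → ‖u - y‖ ≤ ε₀ →
      g u ≤ 1 + c₅ * ‖u - y‖ ^ 2) :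
    ∃ c : ℝ, 0 < c ∧ ∃ c' : ℝ, 0 < c' ∧
      ∀ x : EuclideanSpace ℝ (Fin d), x ≠ 0 →
        ‖(‖x‖⁻¹ • x) - θ‖ ≤ g x ^ (-(1/6) : ℝ) →
        ‖x - (((inner ℝ x n : ℝ) / (inner ℝ y n : ℝ)) • y)‖ ≤ c * g x ^ ((5 : ℝ)/6) ∧
        |g x - g (((inner ℝ x n : ℝ) / (inner ℝ y n : ℝ)) • y)| ≤
          c' * g x ^ ((2 : ℝ)/3) := by
  obtain ⟨M, hM0, hM⟩ := g_upper' g hg0 hgadd hgsmul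
  obtain ⟨m, hm0, hm⟩ := g_lower' hd g hg0 hgadd hgsmul hgdef hM0 hM
  have hgy : g y = 1 := by
    rw [hydef, hgsmul, abs_of_pos (inv_pos.2 hgθ), inv_mul_cancel₀ hgθ.ne']
  set β : ℝ := (inner ℝ y n : ℝ) with hβdef
  clear_value β
  have hβnn : 0 ≤ β := by
    have h := hsupp (-y) (by rw [g_neg' g hgsmul, hgy])
    rw [inner_neg_left, ← hβdef] at h
    linarith only [h]
  have hθy : θ = g θ • y := by
    rw [hydef, smul_smul, mul_inv_cancel₀ hgθ.ne', one_smul]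
  have hθn : (inner ℝ θ n : ℝ) = g θ * β := by
    conv_lhs => rw [hθy]
    rw [real_inner_smul_left, ← hβdef]
  have hβ0 : 0 < β := by
    have hd1 : (0:ℝ) < Real.sqrt d := Real.sqrt_pos.2 (by exact_mod_cast hd)
    have h1 : (0:ℝ) < |(inner ℝ θ n : ℝ)| := lt_of_lt_of_le (by positivity) harcsin
    rw [hθn, abs_of_nonneg (by positivity : (0:ℝ) ≤ g θ * β)] at h1
    nlinarith only [h1, hgθ, hβnn]
  have hsupp' : ∀ w, (inner ℝ w n : ℝ) ≤ β * g w := by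
    intro w
    rcases eq_or_ne (g w) 0 with hw | hw
    · have hw0 : w = 0 := hgdef w hw
      rw [hw0] at hw ⊢
      simp [hw]
    · have hwpos : 0 < g w := (hg0 w).lt_of_ne (Ne.symm hw)
      have h := hsupp ((g w)⁻¹ • w)
        (by rw [hgsmul, abs_of_pos (inv_pos.2 hwpos), inv_mul_cancel₀ hw])
      rw [real_inner_smul_left] at h
      have h2 := mul_le_mul_of_nonneg_right h hwpos.le
      have h3 : (g w)⁻¹ * (inner ℝ w n : ℝ) * g w = (inner ℝ w n : ℝ) := by field_simp
      rw [h3] at h2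
      linarith only [h2]
  set C1 : ℝ := 1/m + M/(m * g θ) with hC1def
  clear_value C1
  have hC1 : 0 < C1 := by rw [hC1def]; positivity
  set C2 : ℝ := 2*C1/(β*m) + C1 with hC2def
  clear_value C2
  have hC2 : 0 < C2 := by rw [hC2def]; positivity
  set δ0 : ℝ := min (β/(2*C1)) (ε₀/C2) with hδ0def
  clear_value δ0
  have hδ0 : 0 < δ0 := by rw [hδ0def]; exact lt_min (by positivity) (by positivity)
  set c : ℝ := (1 + ‖y‖/β)/m with hcdef
  clear_value c
  have hc : 0 < c := by rw [hcdef]; positivity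
  set c' : ℝ := max (M*c/δ0) (c₅*C2^2) with hc'def
  clear_value c'
  have hc' : 0 < c' := lt_of_lt_of_le (by positivity : (0:ℝ) < M*c/δ0)
    (hc'def ▸ le_max_left _ _)
  refine ⟨c, hc, c', hc', ?_⟩
  intro x hx hxθ
  have hgx : 0 < g x := by
    rcases (hg0 x).lt_or_eq with h | h
    · exact h
    · exact absurd (hgdef x h.symm) hx
  set r : ℝ := ‖x‖ with hr
  clear_value r
  have hxn : 0 < r := by rw [hr]; exact norm_pos_iff.2 hx
  set δ : ℝ := g x ^ (-(1/6) : ℝ) with hδdef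
  clear_value δ
  have hδpos : 0 < δ := by rw [hδdef]; exact Real.rpow_pos_of_pos hgx _
  set e := r⁻¹ • x - θ with hedef
  clear_value e
  have he : ‖e‖ ≤ δ := hxθ
  have hxdec : x = r • θ + r • e := by
    rw [hedef, smul_sub, smul_inv_smul₀ hxn.ne']
    abel
  have hinx : (inner ℝ x n : ℝ) = r * (g θ * β) + r * (inner ℝ e n : ℝ) := by
    conv_lhs => rw [hxdec]
    rw [inner_add_left, real_inner_smul_left, real_inner_smul_left, hθn]
  have hen : |(inner ℝ e n : ℝ)| ≤ δ := by
    have h := abs_real_inner_le_norm e n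
    rw [hn, mul_one] at h
    linarith only [h, he]
  -- first estimate
  have hscal : (inner ℝ x n : ℝ)/β = r * g θ + (r * (inner ℝ e n : ℝ))/β := by
    rw [hinx]
    field_simp
  have hP : x - ((inner ℝ x n : ℝ)/β) • y = r • e - ((r * (inner ℝ e n : ℝ))/β) • y := by
    rw [hscal, add_smul]
    have hsy : (r * g θ) • y = r • θ := by rw [mul_smul, ← hθy]
    rw [hsy, hxdec]
    abel
  have hE1' : ‖x - ((inner ℝ x n : ℝ)/β) • y‖ ≤ r * δ * (1 + ‖y‖/β) := by
    rw [hP]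
    have h1 : ‖r • e‖ ≤ r * δ := by
      rw [norm_smul, Real.norm_eq_abs, abs_of_pos hxn]
      exact mul_le_mul_of_nonneg_left he hxn.le
    have h2 : ‖((r * (inner ℝ e n : ℝ))/β) • y‖ ≤ r * δ * (‖y‖/β) := by
      rw [norm_smul, Real.norm_eq_abs]
      have habs : |(r * (inner ℝ e n : ℝ))/β| ≤ r * δ / β := by
        rw [abs_div, abs_of_pos hβ0, abs_mul, abs_of_pos hxn]
        gcongr
      calc |(r * (inner ℝ e n : ℝ))/β| * ‖y‖ ≤ (r * δ / β) * ‖y‖ :=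
            mul_le_mul_of_nonneg_right habs (norm_nonneg _)
        _ = r * δ * (‖y‖/β) := by ring
    calc ‖r • e - ((r * (inner ℝ e n : ℝ))/β) • y‖
        ≤ ‖r • e‖ + ‖((r * (inner ℝ e n : ℝ))/β) • y‖ := norm_sub_le _ _
      _ ≤ r * δ + r * δ * (‖y‖/β) := add_le_add h1 h2
      _ = r * δ * (1 + ‖y‖/β) := by ring
  have hxb : r ≤ g x / m := by
    have h := hm x
    rw [← hr] at h
    rw [le_div_iff₀ hm0]
    linarith only [h]
  have hpow56 : g x * δ = g x ^ ((5:ℝ)/6) := by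
    have h56 : ((5:ℝ)/6) = 1 + (-(1/6)) := by norm_num
    rw [hδdef, h56, Real.rpow_add hgx, Real.rpow_one]
  have hE1 : ‖x - ((inner ℝ x n : ℝ)/β) • y‖ ≤ c * g x ^ ((5:ℝ)/6) := by
    calc ‖x - ((inner ℝ x n : ℝ)/β) • y‖ ≤ r * δ * (1 + ‖y‖/β) := hE1'
      _ ≤ (g x / m) * δ * (1 + ‖y‖/β) := by
          have h1 : (0:ℝ) ≤ 1 + ‖y‖/β := by positivity
          exact mul_le_mul_of_nonneg_right
            (mul_le_mul_of_nonneg_right hxb hδpos.le) h1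
      _ = c * (g x * δ) := by rw [hcdef]; ring
      _ = c * g x ^ ((5:ℝ)/6) := by rw [hpow56]
  refine ⟨hE1, ?_⟩
  rcases le_or_gt δ0 δ with hcase | hcase
  · -- crude case: g x bounded
    have h1 : |g x - g (((inner ℝ x n : ℝ)/β) • y)| ≤ g (x - ((inner ℝ x n : ℝ)/β) • y) :=
      g_abs_sub' g hgadd hgsmul _ _
    have h2 := hM (x - ((inner ℝ x n : ℝ)/β) • y)
    have h3 : M * ‖x - ((inner ℝ x n : ℝ)/β) • y‖ ≤ M * (c * g x ^ ((5:ℝ)/6)) :=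
      mul_le_mul_of_nonneg_left hE1 hM0.le
    have hsplit : g x ^ ((5:ℝ)/6) = g x ^ ((2:ℝ)/3) * g x ^ ((1:ℝ)/6) := by
      rw [← Real.rpow_add hgx]
      norm_num
    have hδinv : g x ^ ((1:ℝ)/6) * δ = 1 := by
      have h0 : (1:ℝ)/6 + (-(1/6)) = 0 := by norm_num
      rw [hδdef, ← Real.rpow_add hgx, h0, Real.rpow_zero]
    have h16 : g x ^ ((1:ℝ)/6) ≤ 1/δ0 := by
      have heq : g x ^ ((1:ℝ)/6) = 1/δ := by
        rw [eq_div_iff hδpos.ne']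
        exact hδinv
      rw [heq]
      exact one_div_le_one_div_of_le hδ0 hcase
    have h23 : (0:ℝ) ≤ g x ^ ((2:ℝ)/3) := (Real.rpow_pos_of_pos hgx _).le
    have hfin : M * (c * g x ^ ((5:ℝ)/6)) ≤ (M*c/δ0) * g x ^ ((2:ℝ)/3) := by
      rw [hsplit]
      calc M * (c * (g x ^ ((2:ℝ)/3) * g x ^ ((1:ℝ)/6)))
          = (M*c* g x ^ ((1:ℝ)/6)) * g x ^ ((2:ℝ)/3) := by ring
        _ ≤ (M*c*(1/δ0)) * g x ^ ((2:ℝ)/3) := by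
            apply mul_le_mul_of_nonneg_right _ h23
            exact mul_le_mul_of_nonneg_left h16 (by positivity)
        _ = (M*c/δ0) * g x ^ ((2:ℝ)/3) := by ring
    have hlast : (M*c/δ0) * g x ^ ((2:ℝ)/3) ≤ c' * g x ^ ((2:ℝ)/3) :=
      mul_le_mul_of_nonneg_right (hc'def ▸ le_max_left _ _) h23
    linarith only [h1, h2, h3, hfin, hlast]
  · -- main case via sub-curvature
    set u' := (g x)⁻¹ • x with hu'def
    clear_value u'
    have hgu : g u' = 1 := by
      rw [hu'def, hgsmul, abs_of_pos (inv_pos.2 hgx), inv_mul_cancel₀ hgx.ne']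
    have hu'norm : ‖u'‖ ≤ 1/m := by
      have h := hm u'
      rw [hgu] at h
      rw [le_div_iff₀ hm0]
      linarith only [h]
    set t : ℝ := (g x)⁻¹ * r with htdef
    clear_value t
    have ht : 0 < t := by rw [htdef]; positivity
    have hu'w : u' = t • (r⁻¹ • x) := by
      rw [hu'def, htdef, smul_smul]
      congr 1
      field_simp
    have hu'n : ‖u'‖ = t := by
      rw [hu'def, norm_smul, norm_inv, Real.norm_eq_abs, abs_of_pos hgx, ← hr, htdef]
    have hue : u' - t • θ = t • e := by
      rw [hu'w, hedef, smul_sub]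
    have huenorm : ‖u' - t • θ‖ ≤ δ/m := by
      rw [hue, norm_smul, Real.norm_eq_abs, abs_of_pos ht]
      have htm : t ≤ 1/m := hu'n ▸ hu'norm
      calc t * ‖e‖ ≤ (1/m) * δ := mul_le_mul htm he (norm_nonneg e) (by positivity)
        _ = δ/m := by ring
    have h1 : |1 - t * g θ| ≤ M * (δ/m) := by
      have ha : g (t • θ) = t * g θ := by rw [hgsmul, abs_of_pos ht]
      have hb := g_abs_sub' g hgadd hgsmul u' (t • θ)
      rw [hgu, ha] at hb
      have hcC := hM (u' - t • θ)
      have hd2 := mul_le_mul_of_nonneg_left huenorm hM0.le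
      linarith only [hb, hcC, hd2]
    have huy : ‖u' - y‖ ≤ C1 * δ := by
      have htri : ‖u' - y‖ ≤ ‖u' - t • θ‖ + ‖t • θ - y‖ := by
        have h : u' - y = (u' - t • θ) + (t • θ - y) := by abel
        rw [h]; exact norm_add_le _ _
      have h2 : ‖t • θ - y‖ = |t - (g θ)⁻¹| := by
        rw [hydef, ← sub_smul, norm_smul, Real.norm_eq_abs, hθ, mul_one]
      have h3 : |t - (g θ)⁻¹| ≤ M*δ/(m * g θ) := by
        have heq : t - (g θ)⁻¹ = (t * g θ - 1)/(g θ) := by field_simp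
        rw [heq, abs_div, abs_of_pos hgθ]
        rw [abs_sub_comm] at h1
        calc |t * g θ - 1|/(g θ) ≤ (M * (δ/m))/(g θ) := by gcongr
          _ = M*δ/(m * g θ) := by ring
      calc ‖u' - y‖ ≤ ‖u' - t • θ‖ + ‖t • θ - y‖ := htri
        _ ≤ δ/m + M*δ/(m * g θ) := by rw [h2]; exact add_le_add huenorm h3
        _ = C1 * δ := by rw [hC1def]; ring
    set s : ℝ := (inner ℝ u' n : ℝ) with hsdef
    clear_value s
    have hsδ : |s - β| ≤ C1 * δ := by
      have heq : s - β = (inner ℝ (u' - y) n : ℝ) := by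
        rw [inner_sub_left, ← hsdef, ← hβdef]
      rw [heq]
      have h := abs_real_inner_le_norm (u' - y) n
      rw [hn, mul_one] at h
      linarith only [h, huy]
    have hC1δ : C1 * δ ≤ β/2 := by
      have h1' : δ ≤ β/(2*C1) := le_trans hcase.le (hδ0def ▸ min_le_left _ _)
      calc C1 * δ ≤ C1 * (β/(2*C1)) := mul_le_mul_of_nonneg_left h1' hC1.le
        _ = β/2 := by field_simp
    have hslb : β/2 ≤ s := by
      have h := abs_le.1 hsδ
      linarith only [h.1, hC1δ]
    have hspos : 0 < s := by linarith only [hslb, hβ0]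
    have hsub2 : s ≤ β := by
      have h := hsupp' u'
      rw [hgu, mul_one] at h
      rw [hsdef]
      exact h
    set v := (β/s) • u' with hvdef
    clear_value v
    have hvn : (inner ℝ (v - y) n : ℝ) = 0 := by
      rw [inner_sub_left, hvdef, real_inner_smul_left, ← hsdef, ← hβdef]
      field_simp; ring
    have hvu : ‖v - u'‖ ≤ 2*C1*δ/(β*m) := by
      have hveq : v - u' = (β/s - 1) • u' := by rw [hvdef, sub_smul, one_smul]
      rw [hveq, norm_smul, Real.norm_eq_abs]
      have habs : |β/s - 1| ≤ 2*C1*δ/β := by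
        have heq : β/s - 1 = (β - s)/s := by field_simp
        rw [heq, abs_div, abs_of_pos hspos]
        have hnum : |β - s| ≤ C1*δ := by rw [abs_sub_comm]; exact hsδ
        calc |β - s|/s ≤ (C1*δ)/(β/2) := by gcongr
          _ = 2*C1*δ/β := by field_simp
      calc |β/s - 1| * ‖u'‖ ≤ (2*C1*δ/β) * (1/m) :=
            mul_le_mul habs hu'norm (norm_nonneg _) (by positivity)
        _ = 2*C1*δ/(β*m) := by ring
    have hvy : ‖v - y‖ ≤ C2*δ := by
      have htri : ‖v - y‖ ≤ ‖v - u'‖ + ‖u' - y‖ := by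
        have h : v - y = (v - u') + (u' - y) := by abel
        rw [h]; exact norm_add_le _ _
      calc ‖v - y‖ ≤ 2*C1*δ/(β*m) + C1*δ := by linarith only [htri, hvu, huy]
        _ = C2*δ := by rw [hC2def]; field_simp
    have hvε : ‖v - y‖ ≤ ε₀ := by
      have h1' : δ ≤ ε₀/C2 := le_trans hcase.le (hδ0def ▸ min_le_right _ _)
      have h2' : C2*δ ≤ ε₀ := by
        calc C2*δ ≤ C2*(ε₀/C2) := mul_le_mul_of_nonneg_left h1' hC2.le
          _ = ε₀ := by field_simp
      linarith only [hvy, h2']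
    have hgv : g v = β/s := by
      rw [hvdef, hgsmul, hgu, mul_one, abs_of_pos (div_pos hβ0 hspos)]
    have hsc := hsubcurv v hvn hvε
    rw [hgv] at hsc
    have h2sq : ‖v - y‖^2 ≤ (C2*δ)^2 := by nlinarith only [norm_nonneg (v - y), hvy]
    have hβs : β - s ≤ β * (c₅ * (C2*δ)^2) := by
      rw [div_le_iff₀ hspos] at hsc
      have h3 : β - s ≤ s * (c₅ * ‖v - y‖^2) := by linarith only [hsc]
      have e1 : s * (c₅ * ‖v - y‖^2) ≤ β * (c₅ * ‖v - y‖^2) :=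
        mul_le_mul_of_nonneg_right hsub2 (by positivity)
      have e2 : β * (c₅ * ‖v - y‖^2) ≤ β * (c₅ * (C2*δ)^2) := by
        apply mul_le_mul_of_nonneg_left _ hβ0.le
        exact mul_le_mul_of_nonneg_left h2sq hc₅.le
      linarith only [h3, e1, e2]
    have hxu : x = (g x) • u' := by
      rw [hu'def, smul_smul, mul_inv_cancel₀ hgx.ne', one_smul]
    have hinxs : (inner ℝ x n : ℝ) = g x * s := by
      conv_lhs => rw [hxu]
      rw [real_inner_smul_left, hsdef]
    have hgP : g (((inner ℝ x n : ℝ)/β) • y) = g x * s/β := by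
      rw [hgsmul, hgy, mul_one, hinxs, abs_div, abs_of_pos hβ0,
        abs_of_pos (mul_pos hgx hspos)]
    have hfinal : |g x - g (((inner ℝ x n : ℝ)/β) • y)| ≤ c₅*C2^2 * (g x * δ^2) := by
      rw [hgP]
      have hnonneg : 0 ≤ g x - g x * s/β := by
        have h : g x * s/β ≤ g x := by
          rw [div_le_iff₀ hβ0]
          exact mul_le_mul_of_nonneg_left hsub2 hgx.le
        linarith only [h]
      rw [abs_of_nonneg hnonneg]
      have heq : g x - g x * s/β = g x * (β - s)/β := by field_simp
      rw [heq]
      calc g x * (β - s)/β ≤ g x * (β * (c₅ * (C2*δ)^2))/β := by gcongr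
        _ = c₅*C2^2 * (g x * δ^2) := by field_simp
    have hpow23 : g x * δ^2 = g x ^ ((2:ℝ)/3) := by
      have hδ2 : δ^2 = g x ^ ((-(1/3)) : ℝ) := by
        rw [hδdef, ← Real.rpow_natCast (g x ^ (-(1/6) : ℝ)) 2, ← Real.rpow_mul hgx.le]
        norm_num
      have h23 : ((2:ℝ)/3) = 1 + (-(1/3)) := by norm_num
      rw [hδ2, h23, Real.rpow_add hgx, Real.rpow_one]
    calc |g x - g (((inner ℝ x n : ℝ)/β) • y)| ≤ c₅*C2^2 * (g x * δ^2) := hfinal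
      _ = c₅*C2^2 * g x ^ ((2:ℝ)/3) := by rw [hpow23]
      _ ≤ c' * g x ^ ((2:ℝ)/3) :=
          mul_le_mul_of_nonneg_right (hc'def ▸ le_max_right _ _)
            (Real.rpow_pos_of_pos hgx _).le
end
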